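/- arXiv:1410.6835 — 6 statements merged into one kernel-verified Lean document; each statement's English description precedes it below -/
import Mathlib

section
/- Let the surface S ⊂ G_m^3 be the zero set of the polynomial r₁r₂r₃ + r₁ + r₂ + r₃. Then the union of all positive-dimensional cosets (translates of algebraic subgroups) contained in S is exactly the union of the six lines obtained by permuting the coordinates of {1} × {-1} × G_m, i.e. the lines {(t,1,-1) : t ∈ ℂ*}, {(t,-1,1) : t ∈ ℂ*}, and their coordinate permutations. -/
open Complex
open Polynomial

/-- The surface `S ⊂ G_m³` cut out by `r₁r₂r₃ + r₁ + r₂ + r₃ = 0`. -/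
def cubicSurface : Set (ℂ × ℂ × ℂ) :=
  {z | z.1 ≠ 0 ∧ z.2.1 ≠ 0 ∧ z.2.2 ≠ 0 ∧
    z.1 * z.2.1 * z.2.2 + z.1 + z.2.1 + z.2.2 = 0}

/-- The union of all positive-dimensional cosets (translates of algebraic subgroups of
`G_m³`) contained in `cubicSurface`: a point lies in such a coset iff it lies on a curve
`t ↦ (u₁t^{e₁}, u₂t^{e₂}, u₃t^{e₃})`, `(e₁,e₂,e₃) ≠ 0`, entirely contained in the surface. -/
def cosetLocus : Set (ℂ × ℂ × ℂ) :=
  {z | ∃ (u₁ u₂ u₃ : ℂ) (e₁ e₂ e₃ : ℤ), ¬(e₁ = 0 ∧ e₂ = 0 ∧ e₃ = 0) ∧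
    (∃ t : ℂ, t ≠ 0 ∧ z = (u₁ * t ^ e₁, u₂ * t ^ e₂, u₃ * t ^ e₃)) ∧
    (∀ t : ℂ, t ≠ 0 → (u₁ * t ^ e₁, u₂ * t ^ e₂, u₃ * t ^ e₃) ∈ cubicSurface)}

/-- The six lines obtained by permuting the coordinates of `{(1,-1)} × G_m`. -/
def sixLines : Set (ℂ × ℂ × ℂ) :=
  {z | (z.1 ≠ 0 ∧ ((z.2.1 = 1 ∧ z.2.2 = -1) ∨ (z.2.1 = -1 ∧ z.2.2 = 1))) ∨
       (z.2.1 ≠ 0 ∧ ((z.1 = 1 ∧ z.2.2 = -1) ∨ (z.1 = -1 ∧ z.2.2 = 1))) ∨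
       (z.2.2 ≠ 0 ∧ ((z.1 = 1 ∧ z.2.1 = -1) ∨ (z.1 = -1 ∧ z.2.1 = 1)))}

lemma forward_aux (u₁ u₂ u₃ : ℂ) (e₁ e₂ e₃ : ℤ)
    (hne : ¬(e₁ = 0 ∧ e₂ = 0 ∧ e₃ = 0))
    (hall : ∀ t : ℂ, t ≠ 0 → (u₁ * t ^ e₁, u₂ * t ^ e₂, u₃ * t ^ e₃) ∈ cubicSurface)
    (t₀ : ℂ) (ht₀ : t₀ ≠ 0) :
    (u₁ * t₀ ^ e₁, u₂ * t₀ ^ e₂, u₃ * t₀ ^ e₃) ∈ sixLines := by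
  have h1 := hall 1 one_ne_zero
  simp only [cubicSurface, Set.mem_setOf_eq, one_zpow, mul_one] at h1
  obtain ⟨hu₁, hu₂, hu₃, -⟩ := h1
  have hP : u₁ * u₂ * u₃ ≠ 0 := mul_ne_zero (mul_ne_zero hu₁ hu₂) hu₃
  have heq : ∀ t : ℂ, t ≠ 0 →
      u₁*u₂*u₃ * t ^ (e₁+e₂+e₃) + u₁ * t ^ e₁ + u₂ * t ^ e₂ + u₃ * t ^ e₃ = 0 := by
    intro t ht
    have h := (hall t ht).2.2.2
    rw [zpow_add₀ ht, zpow_add₀ ht]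
    linear_combination h
  set N : ℕ := e₁.natAbs + e₂.natAbs + e₃.natAbs with hN
  have ha : (((e₁+e₂+e₃+N).toNat : ℤ)) = e₁+e₂+e₃+N := Int.toNat_of_nonneg (by omega)
  have hb1 : (((e₁+N).toNat : ℤ)) = e₁+N := Int.toNat_of_nonneg (by omega)
  have hb2 : (((e₂+N).toNat : ℤ)) = e₂+N := Int.toNat_of_nonneg (by omega)
  have hb3 : (((e₃+N).toNat : ℤ)) = e₃+N := Int.toNat_of_nonneg (by omega)
  set a : ℕ := (e₁+e₂+e₃+N).toNat
  set b₁ : ℕ := (e₁+N).toNat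
  set b₂ : ℕ := (e₂+N).toNat
  set b₃ : ℕ := (e₃+N).toNat
  set p : Polynomial ℂ := C (u₁*u₂*u₃) * X^a + C u₁ * X^b₁ + C u₂ * X^b₂ + C u₃ * X^b₃
    with hpdef
  have hroot : ∀ t : ℂ, t ≠ 0 → p.eval t = 0 := by
    intro t ht
    have hta : (t:ℂ)^a = t^(e₁+e₂+e₃) * t^N := by
      rw [← zpow_natCast t a, ha, zpow_add₀ ht, zpow_natCast]
    have htb1 : (t:ℂ)^b₁ = t^e₁ * t^N := by
      rw [← zpow_natCast t b₁, hb1, zpow_add₀ ht, zpow_natCast]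
    have htb2 : (t:ℂ)^b₂ = t^e₂ * t^N := by
      rw [← zpow_natCast t b₂, hb2, zpow_add₀ ht, zpow_natCast]
    have htb3 : (t:ℂ)^b₃ = t^e₃ * t^N := by
      rw [← zpow_natCast t b₃, hb3, zpow_add₀ ht, zpow_natCast]
    have heval : p.eval t = u₁*u₂*u₃ * t^a + u₁*t^b₁ + u₂*t^b₂ + u₃*t^b₃ := by
      simp [hpdef]
    rw [heval, hta, htb1, htb2, htb3]
    linear_combination (t^N : ℂ) * heq t ht
  have hp0 : p = 0 := by
    refine p.eq_zero_of_infinite_isRoot ?_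
    exact Set.Infinite.mono (fun x hx => hroot x (by simpa using hx))
      ((Set.finite_singleton (0:ℂ)).infinite_compl)
  have hco : ∀ n : ℕ, (if n = a then u₁*u₂*u₃ else 0) + (if n = b₁ then u₁ else 0)
      + (if n = b₂ then u₂ else 0) + (if n = b₃ then u₃ else 0) = 0 := by
    intro n
    have h : p.coeff n = 0 := by rw [hp0]; simp
    simp only [hpdef, coeff_add, coeff_C_mul, coeff_X_pow, mul_ite, mul_one,
      mul_zero] at h
    exact h
  simp only [sixLines, Set.mem_setOf_eq]
  by_cases h12 : e₁ = e₂
  · by_cases h13 : e₁ = e₃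
    · -- all exponents equal: impossible
      exfalso
      have Ha := hco a
      rw [if_pos rfl, if_neg (by omega), if_neg (by omega), if_neg (by omega)] at Ha
      simp [hu₁, hu₂, hu₃] at Ha
    · -- e₁ = e₂, e₃ different: forces e₁ = e₂ = 0
      have hx : e₁ + e₂ = 0 := by
        by_contra hcon
        have H3 := hco b₃
        rw [if_neg (by omega), if_neg (by omega), if_neg (by omega), if_pos rfl] at H3
        simp at H3
        exact hu₃ H3
      have he1 : e₁ = 0 := by omega
      have he2 : e₂ = 0 := by omega
      have he3 : e₃ ≠ 0 := by omega
      have HP := hco a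
      rw [if_pos rfl, if_neg (by omega), if_neg (by omega), if_pos (by omega)] at HP
      have H1 := hco b₁
      rw [if_neg (by omega), if_pos rfl, if_pos (by omega), if_neg (by omega)] at H1
      have h12m : u₁ * u₂ = -1 := by
        have h' : (u₁ * u₂ + 1) * u₃ = 0 := by linear_combination HP
        rcases mul_eq_zero.mp h' with h | h
        · linear_combination h
        · exact absurd h hu₃
      have hsq : (u₁ - 1) * (u₁ + 1) = 0 := by linear_combination u₁ * H1 - h12m
      refine Or.inr (Or.inr ⟨mul_ne_zero hu₃ (zpow_ne_zero _ ht₀), ?_⟩)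
      rw [he1, he2]
      simp only [zpow_zero, mul_one]
      rcases mul_eq_zero.mp hsq with h | h
      · exact Or.inl ⟨by linear_combination h, by linear_combination H1 - h⟩
      · exact Or.inr ⟨by linear_combination h, by linear_combination H1 - h⟩
  · by_cases h13 : e₁ = e₃
    · -- e₁ = e₃, e₂ different: forces e₁ = e₃ = 0
      have hx : e₁ + e₃ = 0 := by
        by_contra hcon
        have H2 := hco b₂
        rw [if_neg (by omega), if_neg (by omega), if_pos rfl, if_neg (by omega)] at H2
        simp at H2
        exact hu₂ H2
      have he1 : e₁ = 0 := by omega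
      have he3 : e₃ = 0 := by omega
      have he2 : e₂ ≠ 0 := by omega
      have HP := hco a
      rw [if_pos rfl, if_neg (by omega), if_pos (by omega), if_neg (by omega)] at HP
      have H1 := hco b₁
      rw [if_neg (by omega), if_pos rfl, if_neg (by omega), if_pos (by omega)] at H1
      have h13m : u₁ * u₃ = -1 := by
        have h' : (u₁ * u₃ + 1) * u₂ = 0 := by linear_combination HP
        rcases mul_eq_zero.mp h' with h | h
        · linear_combination h
        · exact absurd h hu₂
      have hsq : (u₁ - 1) * (u₁ + 1) = 0 := by linear_combination u₁ * H1 - h13m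
      refine Or.inr (Or.inl ⟨mul_ne_zero hu₂ (zpow_ne_zero _ ht₀), ?_⟩)
      rw [he1, he3]
      simp only [zpow_zero, mul_one]
      rcases mul_eq_zero.mp hsq with h | h
      · exact Or.inl ⟨by linear_combination h, by linear_combination H1 - h⟩
      · exact Or.inr ⟨by linear_combination h, by linear_combination H1 - h⟩
    · by_cases h23 : e₂ = e₃
      · -- e₂ = e₃, e₁ different: forces e₂ = e₃ = 0
        have hx : e₂ + e₃ = 0 := by
          by_contra hcon
          have H1 := hco b₁
          rw [if_neg (by omega), if_pos rfl, if_neg (by omega), if_neg (by omega)] at H1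
          simp at H1
          exact hu₁ H1
        have he2 : e₂ = 0 := by omega
        have he3 : e₃ = 0 := by omega
        have he1 : e₁ ≠ 0 := by omega
        have HP := hco a
        rw [if_pos rfl, if_pos (by omega), if_neg (by omega), if_neg (by omega)] at HP
        have H2 := hco b₂
        rw [if_neg (by omega), if_neg (by omega), if_pos rfl, if_pos (by omega)] at H2
        have h23m : u₂ * u₃ = -1 := by
          have h' : (u₂ * u₃ + 1) * u₁ = 0 := by linear_combination HP
          rcases mul_eq_zero.mp h' with h | h
          · linear_combination h
          · exact absurd h hu₁
        have hsq : (u₂ - 1) * (u₂ + 1) = 0 := by linear_combination u₂ * H2 - h23m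
        refine Or.inl ⟨mul_ne_zero hu₁ (zpow_ne_zero _ ht₀), ?_⟩
        rw [he2, he3]
        simp only [zpow_zero, mul_one]
        rcases mul_eq_zero.mp hsq with h | h
        · exact Or.inl ⟨by linear_combination h, by linear_combination H2 - h⟩
        · exact Or.inr ⟨by linear_combination h, by linear_combination H2 - h⟩
      · -- all exponents distinct: impossible
        exfalso
        by_cases hx : e₂ + e₃ = 0
        · have H2 := hco b₂
          rw [if_neg (by omega), if_neg (by omega), if_pos rfl, if_neg (by omega)] at H2
          simp at H2
          exact hu₂ H2
        · have H1 := hco b₁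
          rw [if_neg (by omega), if_pos rfl, if_neg (by omega), if_neg (by omega)] at H1
          simp at H1
          exact hu₁ H1

/-- The union of all positive-dimensional cosets of `G_m³` contained in the surface
`r₁r₂r₃ + r₁ + r₂ + r₃ = 0` is exactly the union of the six lines obtained by permuting
the coordinates of `{(1,-1)} × G_m`. -/
theorem cosetLocus_eq_sixLines : cosetLocus = sixLines := by
  ext z
  constructor
  · rintro ⟨u₁, u₂, u₃, e₁, e₂, e₃, hne, ⟨t, ht, rfl⟩, hall⟩
    exact forward_aux u₁ u₂ u₃ e₁ e₂ e₃ hne hall t ht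
  · intro hz
    obtain ⟨x, y, w⟩ := z
    simp only [sixLines, Set.mem_setOf_eq] at hz
    simp only [cosetLocus, Set.mem_setOf_eq]
    rcases hz with ⟨hx, ⟨h1, h2⟩ | ⟨h1, h2⟩⟩ | ⟨hy, ⟨h1, h2⟩ | ⟨h1, h2⟩⟩ | ⟨hw, ⟨h1, h2⟩ | ⟨h1, h2⟩⟩
    · refine ⟨x, 1, -1, 1, 0, 0, by simp, ⟨1, one_ne_zero, by simp [h1, h2]⟩, fun t ht => ?_⟩
      simp only [cubicSurface, Set.mem_setOf_eq, zpow_one, zpow_zero, mul_one, one_mul]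
      exact ⟨mul_ne_zero hx ht, one_ne_zero, by norm_num, by ring⟩
    · refine ⟨x, -1, 1, 1, 0, 0, by simp, ⟨1, one_ne_zero, by simp [h1, h2]⟩, fun t ht => ?_⟩
      simp only [cubicSurface, Set.mem_setOf_eq, zpow_one, zpow_zero, mul_one, one_mul]
      exact ⟨mul_ne_zero hx ht, by norm_num, one_ne_zero, by ring⟩
    · refine ⟨1, y, -1, 0, 1, 0, by simp, ⟨1, one_ne_zero, by simp [h1, h2]⟩, fun t ht => ?_⟩
      simp only [cubicSurface, Set.mem_setOf_eq, zpow_one, zpow_zero, mul_one, one_mul]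
      exact ⟨one_ne_zero, mul_ne_zero hy ht, by norm_num, by ring⟩
    · refine ⟨-1, y, 1, 0, 1, 0, by simp, ⟨1, one_ne_zero, by simp [h1, h2]⟩, fun t ht => ?_⟩
      simp only [cubicSurface, Set.mem_setOf_eq, zpow_one, zpow_zero, mul_one, one_mul]
      exact ⟨by norm_num, mul_ne_zero hy ht, one_ne_zero, by ring⟩
    · refine ⟨1, -1, w, 0, 0, 1, by simp, ⟨1, one_ne_zero, by simp [h1, h2]⟩, fun t ht => ?_⟩
      simp only [cubicSurface, Set.mem_setOf_eq, zpow_one, zpow_zero, mul_one, one_mul]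
      exact ⟨one_ne_zero, by norm_num, mul_ne_zero hw ht, by ring⟩
    · refine ⟨-1, 1, w, 0, 0, 1, by simp, ⟨1, one_ne_zero, by simp [h1, h2]⟩, fun t ht => ?_⟩
      simp only [cubicSurface, Set.mem_setOf_eq, zpow_one, zpow_zero, mul_one, one_mul]
      exact ⟨by norm_num, one_ne_zero, mul_ne_zero hw ht, by ring⟩
end

section
/- Suppose b = (b₁, b₂, b₃) ∈ (ℂ*)³ has all nonzero coordinates, and let C_b ⊂ ℂ² be the line {(x₁, x₂) : b₁x₁ + b₂x₂ + b₃ = 0} minus the points where x₁x₂(x₁±1)(x₂±1)(x₁±x₂) = 0. Then the image of C_b under the map R(x₁,x₂) = ((x₂-1)/(x₂+1), (1-x₁)/(1+x₁), (x₁-x₂)/(x₁+x₂)) into G_m^3 is not contained in any translate of a proper algebraic subgroup of G_m^3. Equivalently, there is no (a₁,a₂,a₃) ∈ ℤ³ \ {0} such that ((x₂-1)/(x₂+1))^{a₁} · ((1-x₁)/(1+x₁))^{a₂} · ((x₁-x₂)/(x₁+x₂))^{a₃} is constant on C_b. -/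
open Polynomial

noncomputable def chi (p : Prop) : ℤ := by classical exact if p then 1 else 0

lemma chi_pos {p : Prop} (h : p) : chi p = 1 := by simp [chi, h]
lemma chi_neg {p : Prop} (h : ¬p) : chi p = 0 := by simp [chi, h]

noncomputable def lin (v w : ℂ) : ℂ[X] := C v * X + C w

lemma lin_eval (v w x : ℂ) : (lin v w).eval x = v * x + w := by simp [lin]

lemma lin_ne_zero {v w : ℂ} (h : ¬(v = 0 ∧ w = 0)) : lin v w ≠ 0 := by
  intro h0
  apply h
  constructor
  · have := congrArg (fun p => coeff p 1) h0
    simpa [lin, coeff_C] using this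
  · have := congrArg (fun p => coeff p 0) h0
    simpa [lin, coeff_C] using this

lemma rm_pow {p : ℂ[X]} (hp : p ≠ 0) (x : ℂ) (n : ℕ) :
    rootMultiplicity x (p ^ n) = n * rootMultiplicity x p := by
  induction n with
  | zero => simp [rootMultiplicity_eq_zero (by simp [IsRoot] : ¬ IsRoot (1 : ℂ[X]) x)]
  | succ n ih =>
    rw [pow_succ, rootMultiplicity_mul (mul_ne_zero (pow_ne_zero _ hp) hp), ih]
    ring

lemma rm_lin {v w : ℂ} (h : ¬(v = 0 ∧ w = 0)) (x : ℂ) :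
    (rootMultiplicity x (lin v w) : ℤ) = chi (v * x + w = 0) := by
  by_cases hr : v * x + w = 0
  · rw [chi_pos hr]
    have hv : v ≠ 0 := by rintro rfl; exact h ⟨rfl, by simpa using hr⟩
    have hlin : lin v w = C v * (X - C x) := by
      rw [lin, mul_sub, ← C_mul]
      have : w = -(v * x) := by linear_combination hr
      rw [this, map_neg]; ring
    rw [hlin, rootMultiplicity_mul (mul_ne_zero (fun hc => hv (by simpa using hc)) (X_sub_C_ne_zero x)),
      rootMultiplicity_C, rootMultiplicity_X_sub_C_self]
    simp
  · rw [chi_neg hr, rootMultiplicity_eq_zero (by simpa [lin, IsRoot] using hr), Nat.cast_zero]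

lemma rm6 {a b c d e f : ℂ[X]} (ha : a ≠ 0) (hb : b ≠ 0) (hc : c ≠ 0) (hd : d ≠ 0)
    (he : e ≠ 0) (hf : f ≠ 0) (x : ℂ) :
    rootMultiplicity x (a * b * c * d * e * f) =
      rootMultiplicity x a + rootMultiplicity x b + rootMultiplicity x c +
      rootMultiplicity x d + rootMultiplicity x e + rootMultiplicity x f := by
  have h2 : a * b ≠ 0 := mul_ne_zero ha hb
  have h3 : a * b * c ≠ 0 := mul_ne_zero h2 hc
  have h4 : a * b * c * d ≠ 0 := mul_ne_zero h3 hd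
  have h5 : a * b * c * d * e ≠ 0 := mul_ne_zero h4 he
  rw [rootMultiplicity_mul (mul_ne_zero h5 hf), rootMultiplicity_mul (mul_ne_zero h4 he),
    rootMultiplicity_mul (mul_ne_zero h3 hd), rootMultiplicity_mul (mul_ne_zero h2 hc),
    rootMultiplicity_mul (mul_ne_zero ha hb)]

lemma div_lin (α β N D : ℂ) (hD : D ≠ 0) : α * (N / D) + β = (α * N + β * D) / D := by
  field_simp

lemma zpow_key (z w : ℂ) (hz : z ≠ 0) (hw : w ≠ 0) (a : ℤ) :
    (z / w) ^ a * (w ^ a.toNat * z ^ (-a).toNat) = z ^ a.toNat * w ^ (-a).toNat := by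
  rcases le_or_gt 0 a with h | h
  · lift a to ℕ using h with k
    have h1 : (-(k:ℤ)).toNat = 0 := by omega
    have h2 : ((k:ℤ)).toNat = k := by omega
    simp only [h1, h2, pow_zero, mul_one, one_mul, zpow_natCast]
    rw [div_pow, div_mul_cancel₀ _ (pow_ne_zero _ hw)]
  · obtain ⟨k, hk⟩ : ∃ k : ℕ, a = -(k:ℤ) := ⟨(-a).toNat, by omega⟩
    subst hk
    have h1 : (-(k:ℤ)).toNat = 0 := by omega
    have h2 : (-(-(k:ℤ))).toNat = k := by omega
    simp only [h1, h2, pow_zero, mul_one, one_mul, zpow_neg, zpow_natCast]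
    rw [div_pow, inv_div, div_mul_cancel₀ _ (pow_ne_zero _ hz)]

/-- Let `b = (b₁,b₂,b₃) ∈ (ℂ*)³`, and let `C_b` be the curve
`{(x₁,x₂) : b₁x₁ + b₂x₂ + b₃ = 0}` minus the points where
`x₁x₂(x₁±1)(x₂±1)(x₁±x₂) = 0`.  Then the image of `C_b` under
`R(x₁,x₂) = ((x₂-1)/(x₂+1), (1-x₁)/(1+x₁), (x₁-x₂)/(x₁+x₂))`
is not contained in any translate of a proper algebraic subgroup of `G_m³`:
there is no `(a₁,a₂,a₃) ∈ ℤ³ \ {0}` making the monomial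
`R₁^{a₁} R₂^{a₂} R₃^{a₃}` constant on `C_b`. -/
theorem image_not_in_coset (b₁ b₂ b₃ : ℂ) (hb₁ : b₁ ≠ 0) (hb₂ : b₂ ≠ 0) (hb₃ : b₃ ≠ 0) :
    ¬ ∃ (a₁ a₂ a₃ : ℤ), ¬(a₁ = 0 ∧ a₂ = 0 ∧ a₃ = 0) ∧ ∃ c : ℂ,
      ∀ x₁ x₂ : ℂ, b₁ * x₁ + b₂ * x₂ + b₃ = 0 →
        x₁ ≠ 0 → x₂ ≠ 0 → x₁ ≠ 1 → x₁ ≠ -1 → x₂ ≠ 1 → x₂ ≠ -1 → x₁ ≠ x₂ → x₁ ≠ -x₂ →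
        ((x₂ - 1) / (x₂ + 1)) ^ a₁ * ((1 - x₁) / (1 + x₁)) ^ a₂ *
          ((x₁ - x₂) / (x₁ + x₂)) ^ a₃ = c := by
  rintro ⟨A₁, A₂, A₃, hA, c, H⟩
  set s := b₁ with hs_def
  set t := b₂ with ht_def
  set u := b₃ with hu_def
  have hs : s ≠ 0 := hb₁
  have ht : t ≠ 0 := hb₂
  have hu : u ≠ 0 := hb₃
  set m1 := A₁.toNat with hm1
  set n1 := (-A₁).toNat with hn1
  set m2 := A₂.toNat with hm2
  set n2 := (-A₂).toNat with hn2
  set m3 := A₃.toNat with hm3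
  set n3 := (-A₃).toNat with hn3
  set p1 : ℂ[X] := lin s (t + u) with hp1_def
  set q1 : ℂ[X] := lin s (u - t) with hq1_def
  set p2 : ℂ[X] := lin (-1) 1 with hp2_def
  set q2 : ℂ[X] := lin 1 1 with hq2_def
  set p3 : ℂ[X] := lin (s + t) u with hp3_def
  set q3 : ℂ[X] := lin (t - s) (-u) with hq3_def
  have hp1 : p1 ≠ 0 := lin_ne_zero (fun h => hs h.1)
  have hq1 : q1 ≠ 0 := lin_ne_zero (fun h => hs h.1)
  have hp2 : p2 ≠ 0 := lin_ne_zero (by norm_num)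
  have hq2 : q2 ≠ 0 := lin_ne_zero (by norm_num)
  have hp3 : p3 ≠ 0 := lin_ne_zero (fun h => hu h.2)
  have hq3 : q3 ≠ 0 := lin_ne_zero (fun h => hu (by simpa using h.2))
  set F : ℂ[X] := p1 ^ m1 * q1 ^ n1 * p2 ^ m2 * q2 ^ n2 * p3 ^ m3 * q3 ^ n3 with hF_def
  set G : ℂ[X] := p1 ^ n1 * q1 ^ m1 * p2 ^ n2 * q2 ^ m2 * p3 ^ n3 * q3 ^ m3 with hG_def
  have hF : F ≠ 0 := by
    refine mul_ne_zero (mul_ne_zero (mul_ne_zero (mul_ne_zero (mul_ne_zero ?_ ?_) ?_) ?_) ?_) ?_ <;>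
      exact pow_ne_zero _ (by assumption)
  have hG : G ≠ 0 := by
    refine mul_ne_zero (mul_ne_zero (mul_ne_zero (mul_ne_zero (mul_ne_zero ?_ ?_) ?_) ?_) ?_) ?_ <;>
      exact pow_ne_zero _ (by assumption)
  set B : ℂ[X] := X * (X - 1) * (X + 1) * lin s u * p1 * q1 * p3 * q3 with hB_def
  have hB : B ≠ 0 := by
    refine mul_ne_zero (mul_ne_zero (mul_ne_zero (mul_ne_zero (mul_ne_zero
      (mul_ne_zero (mul_ne_zero X_ne_zero ?_) ?_) ?_) hp1) hq1) hp3) hq3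
    · exact fun h => by simpa using congrArg (fun p => coeff p 0) h
    · exact fun h => by simpa using congrArg (fun p => coeff p 0) h
    · exact lin_ne_zero (fun h => hs h.1)
  have key : ∀ x : ℂ, B.eval x ≠ 0 → F.eval x = c * G.eval x := by
    intro x hx
    rw [hB_def] at hx
    simp only [eval_mul, eval_X, eval_sub, eval_add, eval_one, lin_eval, hp1_def, hq1_def,
      hp3_def, hq3_def, mul_ne_zero_iff] at hx
    obtain ⟨⟨⟨⟨⟨⟨⟨hx0, hx1⟩, hxm1⟩, hsu⟩, he1⟩, he2⟩, he3⟩, he4⟩ := hx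
    set y : ℂ := -(s * x + u) / t with hy_def
    have hty : t * y = -(s * x + u) := by
      rw [hy_def]; field_simp
    have hx1' : x ≠ 1 := fun h => hx1 (by rw [h]; ring)
    have hxm1' : x ≠ -1 := fun h => hxm1 (by rw [h]; ring)
    have hy0 : y ≠ 0 := by
      intro h
      apply hsu
      have h2 : t * y = 0 := by rw [h]; ring
      linear_combination -h2 + hty
    have hy1 : y ≠ 1 := by
      intro h
      apply he1
      have h2 : t * y = t := by rw [h]; ring
      linear_combination hty - h2
    have hym1 : y ≠ -1 := by
      intro h
      apply he2
      have h2 : t * y = -t := by rw [h]; ring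
      linear_combination hty - h2
    have hxy : x ≠ y := by
      intro h
      apply he3
      have h2 : t * y = t * x := by rw [h]
      linear_combination hty - h2
    have hxny : x ≠ -y := by
      intro h
      apply he4
      have h2 : t * y = -(t * x) := by rw [h]; ring
      linear_combination -hty + h2
    have hline : s * x + t * y + u = 0 := by linear_combination hty
    have Hxy := H x y hline hx0 hy0 hx1' hxm1' hy1 hym1 hxy hxny
    have hz1 : y - 1 ≠ 0 := sub_ne_zero.mpr hy1
    have hw1 : y + 1 ≠ 0 := fun h => hym1 (by linear_combination h)
    have hz2 : 1 - x ≠ 0 := fun h => hx1' (by linear_combination -h)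
    have hw2 : 1 + x ≠ 0 := fun h => hxm1' (by linear_combination h)
    have hz3 : x - y ≠ 0 := sub_ne_zero.mpr hxy
    have hw3 : x + y ≠ 0 := fun h => hxny (by linear_combination h)
    have k1 := zpow_key (y - 1) (y + 1) hz1 hw1 A₁
    have k2 := zpow_key (1 - x) (1 + x) hz2 hw2 A₂
    have k3 := zpow_key (x - y) (x + y) hz3 hw3 A₃
    rw [← hm1, ← hn1] at k1
    rw [← hm2, ← hn2] at k2
    rw [← hm3, ← hn3] at k3
    have hNum : ((y-1)^m1 * (y+1)^n1) * ((1-x)^m2 * (1+x)^n2) * ((x-y)^m3 * (x+y)^n3)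
        = c * (((y+1)^m1 * (y-1)^n1) * ((1+x)^m2 * (1-x)^n2) * ((x+y)^m3 * (x-y)^n3)) := by
      rw [← k1, ← k2, ← k3, ← Hxy]
      ring
    have e1 : s * x + (t + u) = -t * (y - 1) := by linear_combination hty
    have e2 : s * x + (u - t) = -t * (y + 1) := by linear_combination hty
    have e3 : (s + t) * x + u = t * (x - y) := by linear_combination hty
    have e4 : (t - s) * x + -u = t * (x + y) := by linear_combination -hty
    rw [hF_def, hG_def]
    simp only [eval_mul, eval_pow, hp1_def, hq1_def, hp2_def, hq2_def, hp3_def, hq3_def, lin_eval]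
    rw [e1, e2, e3, e4,
      show (-1 : ℂ) * x + 1 = 1 - x by ring, show (1 : ℂ) * x + 1 = 1 + x by ring]
    simp only [mul_pow]
    linear_combination ((-t)^m1 * (-t)^n1 * t^m3 * t^n3) * hNum
  have hFG : F = C c * G := by
    have hinf : {x : ℂ | IsRoot (F - C c * G) x}.Infinite := by
      apply Set.Infinite.mono (s := {x : ℂ | IsRoot B x}ᶜ)
      · intro x hx
        simp only [Set.mem_compl_iff, Set.mem_setOf_eq, IsRoot] at hx ⊢
        have h2 : eval x (C c * G) = c * eval x G := by rw [eval_mul, eval_C]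
        rw [eval_sub, h2, key x hx, sub_self]
      · exact Set.Finite.infinite_compl (finite_setOf_isRoot hB)
    have h0 := eq_zero_of_infinite_isRoot _ hinf
    linear_combination h0
  have hc : c ≠ 0 := by
    intro h
    exact hF (by rw [hFG, h, map_zero, zero_mul])
  have master : ∀ ρ : ℂ,
      A₁ * (chi (s * ρ + (t + u) = 0) - chi (s * ρ + (u - t) = 0)) +
      A₂ * (chi ((-1) * ρ + 1 = 0) - chi (1 * ρ + 1 = 0)) +
      A₃ * (chi ((s + t) * ρ + u = 0) - chi ((t - s) * ρ + -u = 0)) = 0 := by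
    intro ρ
    have hmF : (rootMultiplicity ρ F : ℤ) =
        (m1 : ℤ) * chi (s * ρ + (t + u) = 0) + (n1 : ℤ) * chi (s * ρ + (u - t) = 0) +
        (m2 : ℤ) * chi ((-1) * ρ + 1 = 0) + (n2 : ℤ) * chi (1 * ρ + 1 = 0) +
        (m3 : ℤ) * chi ((s + t) * ρ + u = 0) + (n3 : ℤ) * chi ((t - s) * ρ + -u = 0) := by
      rw [hF_def, rm6 (pow_ne_zero _ hp1) (pow_ne_zero _ hq1) (pow_ne_zero _ hp2)
        (pow_ne_zero _ hq2) (pow_ne_zero _ hp3) (pow_ne_zero _ hq3),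
        rm_pow hp1, rm_pow hq1, rm_pow hp2, rm_pow hq2, rm_pow hp3, rm_pow hq3]
      push_cast
      rw [hp1_def, hq1_def, hp2_def, hq2_def, hp3_def, hq3_def,
        rm_lin (fun h => hs h.1), rm_lin (fun h => hs h.1), rm_lin (by norm_num),
        rm_lin (by norm_num), rm_lin (fun h => hu h.2), rm_lin (fun h => hu (by simpa using h.2))]
    have hmG : (rootMultiplicity ρ G : ℤ) =
        (n1 : ℤ) * chi (s * ρ + (t + u) = 0) + (m1 : ℤ) * chi (s * ρ + (u - t) = 0) +
        (n2 : ℤ) * chi ((-1) * ρ + 1 = 0) + (m2 : ℤ) * chi (1 * ρ + 1 = 0) +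
        (n3 : ℤ) * chi ((s + t) * ρ + u = 0) + (m3 : ℤ) * chi ((t - s) * ρ + -u = 0) := by
      rw [hG_def, rm6 (pow_ne_zero _ hp1) (pow_ne_zero _ hq1) (pow_ne_zero _ hp2)
        (pow_ne_zero _ hq2) (pow_ne_zero _ hp3) (pow_ne_zero _ hq3),
        rm_pow hp1, rm_pow hq1, rm_pow hp2, rm_pow hq2, rm_pow hp3, rm_pow hq3]
      push_cast
      rw [hp1_def, hq1_def, hp2_def, hq2_def, hp3_def, hq3_def,
        rm_lin (fun h => hs h.1), rm_lin (fun h => hs h.1), rm_lin (by norm_num),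
        rm_lin (by norm_num), rm_lin (fun h => hu h.2), rm_lin (fun h => hu (by simpa using h.2))]
    have hEq : rootMultiplicity ρ F = rootMultiplicity ρ G := by
      rw [hFG, rootMultiplicity_mul (by rw [← hFG]; exact hF), rootMultiplicity_C, zero_add]
    have hcast : (rootMultiplicity ρ F : ℤ) = (rootMultiplicity ρ G : ℤ) := by exact_mod_cast hEq
    have hA1 : (m1 : ℤ) - (n1 : ℤ) = A₁ := by rw [hm1, hn1]; omega
    have hA2 : (m2 : ℤ) - (n2 : ℤ) = A₂ := by rw [hm2, hn2]; omega
    have hA3 : (m3 : ℤ) - (n3 : ℤ) = A₃ := by rw [hm3, hn3]; omega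
    rw [← hA1, ← hA2, ← hA3]
    linear_combination hcast - hmF + hmG
  -- final case analysis: d1 = s+t+u, d2 = s-t-u, d3 = s-t+u, d4 = s+t-u
  by_cases hD1 : s + t + u = 0
  case pos =>
    have hD2 : ¬(s - t - u = 0) := fun h => hs (by linear_combination (hD1 + h) / 2)
    have hD3 : ¬(s - t + u = 0) := fun h => ht (by linear_combination (hD1 - h) / 2)
    have hD4 : ¬(s + t - u = 0) := fun h => hu (by linear_combination (hD1 - h) / 2)
    have hm := master (-1)
    rw [chi_neg (show ¬(s * -1 + (t + u) = 0) from fun hh => hD2 (by linear_combination -hh)),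
      chi_neg (show ¬(s * -1 + (u - t) = 0) from fun hh => hD4 (by linear_combination -hh)),
      chi_neg (show ¬((-1 : ℂ) * -1 + 1 = 0) by norm_num),
      chi_pos (show (1 : ℂ) * -1 + 1 = 0 by norm_num),
      chi_neg (show ¬((s + t) * -1 + u = 0) from fun hh => hD4 (by linear_combination -hh)),
      chi_neg (show ¬((t - s) * -1 + -u = 0) from fun hh => hD2 (by linear_combination hh))] at hm
    have hA2 : A₂ = 0 := by linear_combination -hm
    have hr := master ((t - u) / s)
    rw [show s * ((t - u) / s) + (t + u) = 2 * t from by rw [div_lin _ _ _ _ hs, div_eq_iff hs]; ring,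
      show s * ((t - u) / s) + (u - t) = 0 from by rw [div_lin _ _ _ _ hs, div_eq_iff hs]; ring,
      show (-1) * ((t - u) / s) + 1 = (s - t + u) / s from by rw [div_lin _ _ _ _ hs, div_eq_div_iff hs hs]; ring,
      show 1 * ((t - u) / s) + 1 = (s + t - u) / s from by rw [div_lin _ _ _ _ hs, div_eq_div_iff hs hs]; ring,
      show (s + t) * ((t - u) / s) + u = t * (s + t - u) / s from by rw [div_lin _ _ _ _ hs, div_eq_div_iff hs hs]; ring,
      show (t - s) * ((t - u) / s) + -u = -(t * (s - t + u)) / s from by rw [div_lin _ _ _ _ hs, div_eq_div_iff hs hs]; ring] at hr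
    rw [chi_neg (show ¬(2 * t = 0) from fun hh => ht (by linear_combination hh / 2)),
      chi_pos (show (0 : ℂ) = 0 from rfl),
      chi_neg (show ¬((s - t + u) / s = 0) from fun hh => hD3 ((div_eq_zero_iff.mp hh).resolve_right hs)),
      chi_neg (show ¬((s + t - u) / s = 0) from fun hh => hD4 ((div_eq_zero_iff.mp hh).resolve_right hs)),
      chi_neg (show ¬(t * (s + t - u) / s = 0) from fun hh => hD4 ((mul_eq_zero.mp ((div_eq_zero_iff.mp hh).resolve_right hs)).resolve_left ht)),
      chi_neg (show ¬(-(t * (s - t + u)) / s = 0) from fun hh => hD3 ((mul_eq_zero.mp (neg_eq_zero.mp ((div_eq_zero_iff.mp hh).resolve_right hs))).resolve_left ht))] at hr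
    have hA1 : A₁ = 0 := by linear_combination -hr
    have ho := master (1)
    rw [chi_pos (show s * 1 + (t + u) = 0 by linear_combination hD1),
      chi_neg (show ¬(s * 1 + (u - t) = 0) from fun hh => hD3 (by linear_combination hh)),
      chi_pos (show (-1 : ℂ) * 1 + 1 = 0 by norm_num),
      chi_neg (show ¬((1 : ℂ) * 1 + 1 = 0) by norm_num),
      chi_pos (show (s + t) * 1 + u = 0 by linear_combination hD1),
      chi_neg (show ¬((t - s) * 1 + -u = 0) from fun hh => hD3 (by linear_combination -hh))] at ho
    have hA3 : A₃ = 0 := by linear_combination ho - hA1 - hA2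
    exact hA ⟨hA1, hA2, hA3⟩

  case neg =>
  by_cases hD2 : s - t - u = 0
  case pos =>
    have hD3 : ¬(s - t + u = 0) := fun h => hu (by linear_combination (h - hD2) / 2)
    have hD4 : ¬(s + t - u = 0) := fun h => ht (by linear_combination (h - hD2) / 2)
    have ho := master (1)
    rw [chi_neg (show ¬(s * 1 + (t + u) = 0) from fun hh => hD1 (by linear_combination hh)),
      chi_neg (show ¬(s * 1 + (u - t) = 0) from fun hh => hD3 (by linear_combination hh)),
      chi_pos (show (-1 : ℂ) * 1 + 1 = 0 by norm_num),
      chi_neg (show ¬((1 : ℂ) * 1 + 1 = 0) by norm_num),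
      chi_neg (show ¬((s + t) * 1 + u = 0) from fun hh => hD1 (by linear_combination hh)),
      chi_neg (show ¬((t - s) * 1 + -u = 0) from fun hh => hD3 (by linear_combination -hh))] at ho
    have hA2 : A₂ = 0 := by linear_combination ho
    have hr := master ((t - u) / s)
    rw [show s * ((t - u) / s) + (t + u) = 2 * t from by rw [div_lin _ _ _ _ hs, div_eq_iff hs]; ring,
      show s * ((t - u) / s) + (u - t) = 0 from by rw [div_lin _ _ _ _ hs, div_eq_iff hs]; ring,
      show (-1) * ((t - u) / s) + 1 = (s - t + u) / s from by rw [div_lin _ _ _ _ hs, div_eq_div_iff hs hs]; ring,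
      show 1 * ((t - u) / s) + 1 = (s + t - u) / s from by rw [div_lin _ _ _ _ hs, div_eq_div_iff hs hs]; ring,
      show (s + t) * ((t - u) / s) + u = t * (s + t - u) / s from by rw [div_lin _ _ _ _ hs, div_eq_div_iff hs hs]; ring,
      show (t - s) * ((t - u) / s) + -u = -(t * (s - t + u)) / s from by rw [div_lin _ _ _ _ hs, div_eq_div_iff hs hs]; ring] at hr
    rw [chi_neg (show ¬(2 * t = 0) from fun hh => ht (by linear_combination hh / 2)),
      chi_pos (show (0 : ℂ) = 0 from rfl),
      chi_neg (show ¬((s - t + u) / s = 0) from fun hh => hD3 ((div_eq_zero_iff.mp hh).resolve_right hs)),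
      chi_neg (show ¬((s + t - u) / s = 0) from fun hh => hD4 ((div_eq_zero_iff.mp hh).resolve_right hs)),
      chi_neg (show ¬(t * (s + t - u) / s = 0) from fun hh => hD4 ((mul_eq_zero.mp ((div_eq_zero_iff.mp hh).resolve_right hs)).resolve_left ht)),
      chi_neg (show ¬(-(t * (s - t + u)) / s = 0) from fun hh => hD3 ((mul_eq_zero.mp (neg_eq_zero.mp ((div_eq_zero_iff.mp hh).resolve_right hs))).resolve_left ht))] at hr
    have hA1 : A₁ = 0 := by linear_combination -hr
    have hm := master (-1)
    rw [chi_pos (show s * -1 + (t + u) = 0 by linear_combination -hD2),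
      chi_neg (show ¬(s * -1 + (u - t) = 0) from fun hh => hD4 (by linear_combination -hh)),
      chi_neg (show ¬((-1 : ℂ) * -1 + 1 = 0) by norm_num),
      chi_pos (show (1 : ℂ) * -1 + 1 = 0 by norm_num),
      chi_neg (show ¬((s + t) * -1 + u = 0) from fun hh => hD4 (by linear_combination -hh)),
      chi_pos (show (t - s) * -1 + -u = 0 by linear_combination hD2)] at hm
    have hA3 : A₃ = 0 := by linear_combination hA1 - hA2 - hm
    exact hA ⟨hA1, hA2, hA3⟩

  case neg =>
  by_cases hD3 : s - t + u = 0
  case pos =>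
    have hD4 : ¬(s + t - u = 0) := fun h => hs (by linear_combination (hD3 + h) / 2)
    have hm := master (-1)
    rw [chi_neg (show ¬(s * -1 + (t + u) = 0) from fun hh => hD2 (by linear_combination -hh)),
      chi_neg (show ¬(s * -1 + (u - t) = 0) from fun hh => hD4 (by linear_combination -hh)),
      chi_neg (show ¬((-1 : ℂ) * -1 + 1 = 0) by norm_num),
      chi_pos (show (1 : ℂ) * -1 + 1 = 0 by norm_num),
      chi_neg (show ¬((s + t) * -1 + u = 0) from fun hh => hD4 (by linear_combination -hh)),
      chi_neg (show ¬((t - s) * -1 + -u = 0) from fun hh => hD2 (by linear_combination hh))] at hm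
    have hA2 : A₂ = 0 := by linear_combination -hm
    have hr := master (-(t + u) / s)
    rw [show s * (-(t + u) / s) + (t + u) = 0 from by rw [div_lin _ _ _ _ hs, div_eq_iff hs]; ring,
      show s * (-(t + u) / s) + (u - t) = -(2 * t) from by rw [div_lin _ _ _ _ hs, div_eq_iff hs]; ring,
      show (-1) * (-(t + u) / s) + 1 = (s + t + u) / s from by rw [div_lin _ _ _ _ hs, div_eq_div_iff hs hs]; ring,
      show 1 * (-(t + u) / s) + 1 = (s - t - u) / s from by rw [div_lin _ _ _ _ hs, div_eq_div_iff hs hs]; ring,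
      show (s + t) * (-(t + u) / s) + u = -(t * (s + t + u)) / s from by rw [div_lin _ _ _ _ hs, div_eq_div_iff hs hs]; ring,
      show (t - s) * (-(t + u) / s) + -u = t * (s - t - u) / s from by rw [div_lin _ _ _ _ hs, div_eq_div_iff hs hs]; ring] at hr
    rw [chi_pos (show (0 : ℂ) = 0 from rfl),
      chi_neg (show ¬(-(2 * t) = 0) from fun hh => ht (by linear_combination -hh / 2)),
      chi_neg (show ¬((s + t + u) / s = 0) from fun hh => hD1 ((div_eq_zero_iff.mp hh).resolve_right hs)),
      chi_neg (show ¬((s - t - u) / s = 0) from fun hh => hD2 ((div_eq_zero_iff.mp hh).resolve_right hs)),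
      chi_neg (show ¬(-(t * (s + t + u)) / s = 0) from fun hh => hD1 ((mul_eq_zero.mp (neg_eq_zero.mp ((div_eq_zero_iff.mp hh).resolve_right hs))).resolve_left ht)),
      chi_neg (show ¬(t * (s - t - u) / s = 0) from fun hh => hD2 ((mul_eq_zero.mp ((div_eq_zero_iff.mp hh).resolve_right hs)).resolve_left ht))] at hr
    have hA1 : A₁ = 0 := by linear_combination hr
    have ho := master (1)
    rw [chi_neg (show ¬(s * 1 + (t + u) = 0) from fun hh => hD1 (by linear_combination hh)),
      chi_pos (show s * 1 + (u - t) = 0 by linear_combination hD3),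
      chi_pos (show (-1 : ℂ) * 1 + 1 = 0 by norm_num),
      chi_neg (show ¬((1 : ℂ) * 1 + 1 = 0) by norm_num),
      chi_neg (show ¬((s + t) * 1 + u = 0) from fun hh => hD1 (by linear_combination hh)),
      chi_pos (show (t - s) * 1 + -u = 0 by linear_combination -hD3)] at ho
    have hA3 : A₃ = 0 := by linear_combination hA2 - hA1 - ho
    exact hA ⟨hA1, hA2, hA3⟩

  case neg =>
  by_cases hD4 : s + t - u = 0
  case pos =>
    have ho := master (1)
    rw [chi_neg (show ¬(s * 1 + (t + u) = 0) from fun hh => hD1 (by linear_combination hh)),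
      chi_neg (show ¬(s * 1 + (u - t) = 0) from fun hh => hD3 (by linear_combination hh)),
      chi_pos (show (-1 : ℂ) * 1 + 1 = 0 by norm_num),
      chi_neg (show ¬((1 : ℂ) * 1 + 1 = 0) by norm_num),
      chi_neg (show ¬((s + t) * 1 + u = 0) from fun hh => hD1 (by linear_combination hh)),
      chi_neg (show ¬((t - s) * 1 + -u = 0) from fun hh => hD3 (by linear_combination -hh))] at ho
    have hA2 : A₂ = 0 := by linear_combination ho
    have hr := master (-(t + u) / s)
    rw [show s * (-(t + u) / s) + (t + u) = 0 from by rw [div_lin _ _ _ _ hs, div_eq_iff hs]; ring,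
      show s * (-(t + u) / s) + (u - t) = -(2 * t) from by rw [div_lin _ _ _ _ hs, div_eq_iff hs]; ring,
      show (-1) * (-(t + u) / s) + 1 = (s + t + u) / s from by rw [div_lin _ _ _ _ hs, div_eq_div_iff hs hs]; ring,
      show 1 * (-(t + u) / s) + 1 = (s - t - u) / s from by rw [div_lin _ _ _ _ hs, div_eq_div_iff hs hs]; ring,
      show (s + t) * (-(t + u) / s) + u = -(t * (s + t + u)) / s from by rw [div_lin _ _ _ _ hs, div_eq_div_iff hs hs]; ring,
      show (t - s) * (-(t + u) / s) + -u = t * (s - t - u) / s from by rw [div_lin _ _ _ _ hs, div_eq_div_iff hs hs]; ring] at hr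
    rw [chi_pos (show (0 : ℂ) = 0 from rfl),
      chi_neg (show ¬(-(2 * t) = 0) from fun hh => ht (by linear_combination -hh / 2)),
      chi_neg (show ¬((s + t + u) / s = 0) from fun hh => hD1 ((div_eq_zero_iff.mp hh).resolve_right hs)),
      chi_neg (show ¬((s - t - u) / s = 0) from fun hh => hD2 ((div_eq_zero_iff.mp hh).resolve_right hs)),
      chi_neg (show ¬(-(t * (s + t + u)) / s = 0) from fun hh => hD1 ((mul_eq_zero.mp (neg_eq_zero.mp ((div_eq_zero_iff.mp hh).resolve_right hs))).resolve_left ht)),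
      chi_neg (show ¬(t * (s - t - u) / s = 0) from fun hh => hD2 ((mul_eq_zero.mp ((div_eq_zero_iff.mp hh).resolve_right hs)).resolve_left ht))] at hr
    have hA1 : A₁ = 0 := by linear_combination hr
    have hm := master (-1)
    rw [chi_neg (show ¬(s * -1 + (t + u) = 0) from fun hh => hD2 (by linear_combination -hh)),
      chi_pos (show s * -1 + (u - t) = 0 by linear_combination -hD4),
      chi_neg (show ¬((-1 : ℂ) * -1 + 1 = 0) by norm_num),
      chi_pos (show (1 : ℂ) * -1 + 1 = 0 by norm_num),
      chi_pos (show (s + t) * -1 + u = 0 by linear_combination -hD4),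
      chi_neg (show ¬((t - s) * -1 + -u = 0) from fun hh => hD2 (by linear_combination hh))] at hm
    have hA3 : A₃ = 0 := by linear_combination hm + hA1 + hA2
    exact hA ⟨hA1, hA2, hA3⟩

  case neg =>
    have ho := master (1)
    rw [chi_neg (show ¬(s * 1 + (t + u) = 0) from fun hh => hD1 (by linear_combination hh)),
      chi_neg (show ¬(s * 1 + (u - t) = 0) from fun hh => hD3 (by linear_combination hh)),
      chi_pos (show (-1 : ℂ) * 1 + 1 = 0 by norm_num),
      chi_neg (show ¬((1 : ℂ) * 1 + 1 = 0) by norm_num),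
      chi_neg (show ¬((s + t) * 1 + u = 0) from fun hh => hD1 (by linear_combination hh)),
      chi_neg (show ¬((t - s) * 1 + -u = 0) from fun hh => hD3 (by linear_combination -hh))] at ho
    have hA2 : A₂ = 0 := by linear_combination ho
    have hr := master (-(t + u) / s)
    rw [show s * (-(t + u) / s) + (t + u) = 0 from by rw [div_lin _ _ _ _ hs, div_eq_iff hs]; ring,
      show s * (-(t + u) / s) + (u - t) = -(2 * t) from by rw [div_lin _ _ _ _ hs, div_eq_iff hs]; ring,
      show (-1) * (-(t + u) / s) + 1 = (s + t + u) / s from by rw [div_lin _ _ _ _ hs, div_eq_div_iff hs hs]; ring,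
      show 1 * (-(t + u) / s) + 1 = (s - t - u) / s from by rw [div_lin _ _ _ _ hs, div_eq_div_iff hs hs]; ring,
      show (s + t) * (-(t + u) / s) + u = -(t * (s + t + u)) / s from by rw [div_lin _ _ _ _ hs, div_eq_div_iff hs hs]; ring,
      show (t - s) * (-(t + u) / s) + -u = t * (s - t - u) / s from by rw [div_lin _ _ _ _ hs, div_eq_div_iff hs hs]; ring] at hr
    rw [chi_pos (show (0 : ℂ) = 0 from rfl),
      chi_neg (show ¬(-(2 * t) = 0) from fun hh => ht (by linear_combination -hh / 2)),
      chi_neg (show ¬((s + t + u) / s = 0) from fun hh => hD1 ((div_eq_zero_iff.mp hh).resolve_right hs)),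
      chi_neg (show ¬((s - t - u) / s = 0) from fun hh => hD2 ((div_eq_zero_iff.mp hh).resolve_right hs)),
      chi_neg (show ¬(-(t * (s + t + u)) / s = 0) from fun hh => hD1 ((mul_eq_zero.mp (neg_eq_zero.mp ((div_eq_zero_iff.mp hh).resolve_right hs))).resolve_left ht)),
      chi_neg (show ¬(t * (s - t - u) / s = 0) from fun hh => hD2 ((mul_eq_zero.mp ((div_eq_zero_iff.mp hh).resolve_right hs)).resolve_left ht))] at hr
    have hA1 : A₁ = 0 := by linear_combination hr
    by_cases hst : s + t = 0
    case pos =>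
      have hts : t - s ≠ 0 := fun h => ht (by linear_combination (hst + h) / 2)
      have hq := master (u / (t - s))
      rw [show s * (u / (t - s)) + (t + u) = -(t * (s - t - u)) / (t - s) from by rw [div_lin _ _ _ _ hts, div_eq_div_iff hts hts]; ring,
        show s * (u / (t - s)) + (u - t) = t * (s - t + u) / (t - s) from by rw [div_lin _ _ _ _ hts, div_eq_div_iff hts hts]; ring,
        show (-1) * (u / (t - s)) + 1 = -(s - t + u) / (t - s) from by rw [div_lin _ _ _ _ hts, div_eq_div_iff hts hts]; ring,
        show 1 * (u / (t - s)) + 1 = -(s - t - u) / (t - s) from by rw [div_lin _ _ _ _ hts, div_eq_div_iff hts hts]; ring,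
        show (s + t) * (u / (t - s)) + u = 2 * (t * u) / (t - s) from by rw [div_lin _ _ _ _ hts, div_eq_div_iff hts hts]; ring,
        show (t - s) * (u / (t - s)) + -u = 0 from by rw [div_lin _ _ _ _ hts, div_eq_iff hts]; ring] at hq
      rw [chi_neg (show ¬(-(t * (s - t - u)) / (t - s) = 0) from fun hh => hD2 ((mul_eq_zero.mp (neg_eq_zero.mp ((div_eq_zero_iff.mp hh).resolve_right hts))).resolve_left ht)),
        chi_neg (show ¬(t * (s - t + u) / (t - s) = 0) from fun hh => hD3 ((mul_eq_zero.mp ((div_eq_zero_iff.mp hh).resolve_right hts)).resolve_left ht)),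
        chi_neg (show ¬(-(s - t + u) / (t - s) = 0) from fun hh => hD3 (neg_eq_zero.mp ((div_eq_zero_iff.mp hh).resolve_right hts))),
        chi_neg (show ¬(-(s - t - u) / (t - s) = 0) from fun hh => hD2 (neg_eq_zero.mp ((div_eq_zero_iff.mp hh).resolve_right hts))),
        chi_neg (show ¬(2 * (t * u) / (t - s) = 0) from fun hh => ((mul_eq_zero.mp ((mul_eq_zero.mp ((div_eq_zero_iff.mp hh).resolve_right hts)).resolve_left (by norm_num : (2:ℂ) ≠ 0))).elim ht hu)),
        chi_pos (show (0 : ℂ) = 0 from rfl)] at hq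
      have hA3 : A₃ = 0 := by linear_combination -hq
      exact hA ⟨hA1, hA2, hA3⟩
    case neg =>
      have hq := master (-u / (s + t))
      rw [show s * (-u / (s + t)) + (t + u) = t * (s + t + u) / (s + t) from by rw [div_lin _ _ _ _ hst, div_eq_div_iff hst hst]; ring,
        show s * (-u / (s + t)) + (u - t) = -(t * (s + t - u)) / (s + t) from by rw [div_lin _ _ _ _ hst, div_eq_div_iff hst hst]; ring,
        show (-1) * (-u / (s + t)) + 1 = (s + t + u) / (s + t) from by rw [div_lin _ _ _ _ hst, div_eq_div_iff hst hst]; ring,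
        show 1 * (-u / (s + t)) + 1 = (s + t - u) / (s + t) from by rw [div_lin _ _ _ _ hst, div_eq_div_iff hst hst]; ring,
        show (s + t) * (-u / (s + t)) + u = 0 from by rw [div_lin _ _ _ _ hst, div_eq_iff hst]; ring,
        show (t - s) * (-u / (s + t)) + -u = -(2 * (t * u)) / (s + t) from by rw [div_lin _ _ _ _ hst, div_eq_div_iff hst hst]; ring] at hq
      rw [chi_neg (show ¬(t * (s + t + u) / (s + t) = 0) from fun hh => hD1 ((mul_eq_zero.mp ((div_eq_zero_iff.mp hh).resolve_right hst)).resolve_left ht)),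
        chi_neg (show ¬(-(t * (s + t - u)) / (s + t) = 0) from fun hh => hD4 ((mul_eq_zero.mp (neg_eq_zero.mp ((div_eq_zero_iff.mp hh).resolve_right hst))).resolve_left ht)),
        chi_neg (show ¬((s + t + u) / (s + t) = 0) from fun hh => hD1 ((div_eq_zero_iff.mp hh).resolve_right hst)),
        chi_neg (show ¬((s + t - u) / (s + t) = 0) from fun hh => hD4 ((div_eq_zero_iff.mp hh).resolve_right hst)),
        chi_pos (show (0 : ℂ) = 0 from rfl),
        chi_neg (show ¬(-(2 * (t * u)) / (s + t) = 0) from fun hh => ((mul_eq_zero.mp ((mul_eq_zero.mp (neg_eq_zero.mp ((div_eq_zero_iff.mp hh).resolve_right hst))).resolve_left (by norm_num : (2:ℂ) ≠ 0))).elim ht hu))] at hq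
      have hA3 : A₃ = 0 := by linear_combination hq
      exact hA ⟨hA1, hA2, hA3⟩
end

section
/- The homogeneous degree-12 polynomial c₁¹² - 3c₁¹⁰c₂² + 6c₁⁸c₂⁴ - 7c₁⁶c₂⁶ + 6c₁⁴c₂⁸ - 3c₁²c₂¹⁰ + c₂¹² - 3c₁¹⁰c₃² - 51c₁⁸c₂²c₃² + 78c₁⁶c₂⁴c₃² + 78c₁⁴c₂⁶c₃² - 51c₁²c₂⁸c₃² - 3c₂¹⁰c₃² + 6c₁⁸c₃⁴ + 78c₁⁶c₂²c₃⁴ + 414c₁⁴c₂⁴c₃⁴ + 78c₁²c₂⁶c₃⁴ + 6c₂⁸c₃⁴ - 7c₁⁶c₃⁶ + 78c₁⁴c₂²c₃⁶ + 78c₁²c₂⁴c₃⁶ - 7c₂⁶c₃⁶ + 6c₁⁴c₃⁸ - 51c₁²c₂²c₃⁸ + 6c₂⁴c₃⁸ - 3c₁²c₃¹⁰ - 3c₂²c₃¹⁰ + c₃¹² has no nontrivial zero in ℤ³, because it has no nontrivial zeros modulo 2. -/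
def Paux (c₁ c₂ c₃ : ℤ) : ℤ :=
  c₁^12 - 3*c₁^10*c₂^2 + 6*c₁^8*c₂^4 - 7*c₁^6*c₂^6 + 6*c₁^4*c₂^8 - 3*c₁^2*c₂^10
        + c₂^12 - 3*c₁^10*c₃^2 - 51*c₁^8*c₂^2*c₃^2 + 78*c₁^6*c₂^4*c₃^2 + 78*c₁^4*c₂^6*c₃^2
        - 51*c₁^2*c₂^8*c₃^2 - 3*c₂^10*c₃^2 + 6*c₁^8*c₃^4 + 78*c₁^6*c₂^2*c₃^4
        + 414*c₁^4*c₂^4*c₃^4 + 78*c₁^2*c₂^6*c₃^4 + 6*c₂^8*c₃^4 - 7*c₁^6*c₃^6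
        + 78*c₁^4*c₂^2*c₃^6 + 78*c₁^2*c₂^4*c₃^6 - 7*c₂^6*c₃^6 + 6*c₁^4*c₃^8
        - 51*c₁^2*c₂^2*c₃^8 + 6*c₂^4*c₃^8 - 3*c₁^2*c₃^10 - 3*c₂^2*c₃^10 + c₃^12

lemma Paux_even (a b c : ℤ) (h : Paux a b c = 0) : 2 ∣ a ∧ 2 ∣ b ∧ 2 ∣ c := by
  have h2 : ∀ x y z : ZMod 2, x^12 - 3*x^10*y^2 + 6*x^8*y^4 - 7*x^6*y^6 + 6*x^4*y^8 - 3*x^2*y^10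
        + y^12 - 3*x^10*z^2 - 51*x^8*y^2*z^2 + 78*x^6*y^4*z^2 + 78*x^4*y^6*z^2
        - 51*x^2*y^8*z^2 - 3*y^10*z^2 + 6*x^8*z^4 + 78*x^6*y^2*z^4
        + 414*x^4*y^4*z^4 + 78*x^2*y^6*z^4 + 6*y^8*z^4 - 7*x^6*z^6
        + 78*x^4*y^2*z^6 + 78*x^2*y^4*z^6 - 7*y^6*z^6 + 6*x^4*z^8
        - 51*x^2*y^2*z^8 + 6*y^4*z^8 - 3*x^2*z^10 - 3*y^2*z^10 + z^12 = 0 →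
        x = 0 ∧ y = 0 ∧ z = 0 := by decide
  have := h2 (a : ZMod 2) (b : ZMod 2) (c : ZMod 2)
  simp only [Paux] at h
  have hcast : ((a : ZMod 2))^12 - 3*(a:ZMod 2)^10*(b:ZMod 2)^2 + 6*(a:ZMod 2)^8*(b:ZMod 2)^4 - 7*(a:ZMod 2)^6*(b:ZMod 2)^6 + 6*(a:ZMod 2)^4*(b:ZMod 2)^8 - 3*(a:ZMod 2)^2*(b:ZMod 2)^10
        + (b:ZMod 2)^12 - 3*(a:ZMod 2)^10*(c:ZMod 2)^2 - 51*(a:ZMod 2)^8*(b:ZMod 2)^2*(c:ZMod 2)^2 + 78*(a:ZMod 2)^6*(b:ZMod 2)^4*(c:ZMod 2)^2 + 78*(a:ZMod 2)^4*(b:ZMod 2)^6*(c:ZMod 2)^2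
        - 51*(a:ZMod 2)^2*(b:ZMod 2)^8*(c:ZMod 2)^2 - 3*(b:ZMod 2)^10*(c:ZMod 2)^2 + 6*(a:ZMod 2)^8*(c:ZMod 2)^4 + 78*(a:ZMod 2)^6*(b:ZMod 2)^2*(c:ZMod 2)^4
        + 414*(a:ZMod 2)^4*(b:ZMod 2)^4*(c:ZMod 2)^4 + 78*(a:ZMod 2)^2*(b:ZMod 2)^6*(c:ZMod 2)^4 + 6*(b:ZMod 2)^8*(c:ZMod 2)^4 - 7*(a:ZMod 2)^6*(c:ZMod 2)^6
        + 78*(a:ZMod 2)^4*(b:ZMod 2)^2*(c:ZMod 2)^6 + 78*(a:ZMod 2)^2*(b:ZMod 2)^4*(c:ZMod 2)^6 - 7*(b:ZMod 2)^6*(c:ZMod 2)^6 + 6*(a:ZMod 2)^4*(c:ZMod 2)^8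
        - 51*(a:ZMod 2)^2*(b:ZMod 2)^2*(c:ZMod 2)^8 + 6*(b:ZMod 2)^4*(c:ZMod 2)^8 - 3*(a:ZMod 2)^2*(c:ZMod 2)^10 - 3*(b:ZMod 2)^2*(c:ZMod 2)^10 + (c:ZMod 2)^12 = 0 := by
    have := congrArg (Int.cast : ℤ → ZMod 2) h
    push_cast at this
    exact this
  obtain ⟨ha, hb, hc⟩ := h2 _ _ _ hcast
  refine ⟨?_, ?_, ?_⟩ <;>
    [exact (ZMod.intCast_zmod_eq_zero_iff_dvd a 2).mp ha;
     exact (ZMod.intCast_zmod_eq_zero_iff_dvd b 2).mp hb;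
     exact (ZMod.intCast_zmod_eq_zero_iff_dvd c 2).mp hc]

lemma Paux_zero (a b c : ℤ) (h : Paux a b c = 0) : a = 0 ∧ b = 0 ∧ c = 0 := by
  by_contra hne
  -- descent on natAbs sum
  have : ∀ n : ℕ, ∀ a b c : ℤ, a.natAbs + b.natAbs + c.natAbs = n →
      Paux a b c = 0 → a = 0 ∧ b = 0 ∧ c = 0 := by
    intro n
    induction n using Nat.strong_induction_on with
    | _ n ih =>
      intro a b c hn h
      obtain ⟨⟨a', ha⟩, ⟨b', hb⟩, ⟨c', hc⟩⟩ := Paux_even a b c h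
      subst ha hb hc
      rcases Nat.eq_zero_or_pos n with h0 | hpos
      · subst h0
        have h1 : (2*a').natAbs = 0 := by omega
        have h2 : (2*b').natAbs = 0 := by omega
        have h3 : (2*c').natAbs = 0 := by omega
        rw [Int.natAbs_eq_zero] at h1 h2 h3
        exact ⟨h1, h2, h3⟩
      · have ha2 : (2*a').natAbs = 2 * a'.natAbs := by simp [Int.natAbs_mul]
        have hb2 : (2*b').natAbs = 2 * b'.natAbs := by simp [Int.natAbs_mul]
        have hc2 : (2*c').natAbs = 2 * c'.natAbs := by simp [Int.natAbs_mul]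
        have hsmall : a'.natAbs + b'.natAbs + c'.natAbs < n := by omega
        have hP' : Paux a' b' c' = 0 := by
          have he : Paux (2*a') (2*b') (2*c') = 4096 * Paux a' b' c' := by
            simp only [Paux]; ring
          rw [he] at h
          omega
        obtain ⟨h1, h2, h3⟩ := ih _ hsmall a' b' c' rfl hP'
        subst h1; subst h2; subst h3
        simp
  exact hne (this _ a b c rfl h)


/-- The homogeneous degree-12 polynomial
`c₁¹² - 3c₁¹⁰c₂² + 6c₁⁸c₂⁴ - 7c₁⁶c₂⁶ + 6c₁⁴c₂⁸ - 3c₁²c₂¹⁰ + c₂¹² - 3c₁¹⁰c₃²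
 - 51c₁⁸c₂²c₃² + 78c₁⁶c₂⁴c₃² + 78c₁⁴c₂⁶c₃² - 51c₁²c₂⁸c₃² - 3c₂¹⁰c₃² + 6c₁⁸c₃⁴
 + 78c₁⁶c₂²c₃⁴ + 414c₁⁴c₂⁴c₃⁴ + 78c₁²c₂⁶c₃⁴ + 6c₂⁸c₃⁴ - 7c₁⁶c₃⁶ + 78c₁⁴c₂²c₃⁶
 + 78c₁²c₂⁴c₃⁶ - 7c₂⁶c₃⁶ + 6c₁⁴c₃⁸ - 51c₁²c₂²c₃⁸ + 6c₂⁴c₃⁸ - 3c₁²c₃¹⁰ - 3c₂²c₃¹⁰ + c₃¹²`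
has no nontrivial zero in `ℤ³` (as it has no nontrivial zeros modulo 2). -/
theorem degree_twelve_poly_no_nontrivial_integral_zero (c₁ c₂ c₃ : ℤ)
    (h : c₁^12 - 3*c₁^10*c₂^2 + 6*c₁^8*c₂^4 - 7*c₁^6*c₂^6 + 6*c₁^4*c₂^8 - 3*c₁^2*c₂^10
        + c₂^12 - 3*c₁^10*c₃^2 - 51*c₁^8*c₂^2*c₃^2 + 78*c₁^6*c₂^4*c₃^2 + 78*c₁^4*c₂^6*c₃^2
        - 51*c₁^2*c₂^8*c₃^2 - 3*c₂^10*c₃^2 + 6*c₁^8*c₃^4 + 78*c₁^6*c₂^2*c₃^4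
        + 414*c₁^4*c₂^4*c₃^4 + 78*c₁^2*c₂^6*c₃^4 + 6*c₂^8*c₃^4 - 7*c₁^6*c₃^6
        + 78*c₁^4*c₂^2*c₃^6 + 78*c₁^2*c₂^4*c₃^6 - 7*c₂^6*c₃^6 + 6*c₁^4*c₃^8
        - 51*c₁^2*c₂^2*c₃^8 + 6*c₂^4*c₃^8 - 3*c₁^2*c₃^10 - 3*c₂^2*c₃^10 + c₃^12 = 0) :
    c₁ = 0 ∧ c₂ = 0 ∧ c₃ = 0 := by
  exact Paux_zero c₁ c₂ c₃ h
end

section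
/- Let ω be the meromorphic one-form on ℙ¹ given by ω = Σᵢ₌₁³ ( rᵢ/(z - xᵢ) - rᵢ/(z + xᵢ) ) dz with distinct nonzero points ±x₁, ±x₂, ±x₃ and nonzero residues rᵢ. Then ω has a zero of order 4 at z = 0 (i.e. ω = C z⁴ dz / Πᵢ(z² - xᵢ²) for some constant C) if and only if Σᵢ₌₁³ rᵢ x_{i+1} x_{i+2} = 0 and Σᵢ₌₁³ rᵢ xᵢ (x_{i+1}² + x_{i+2}²) = 0, indices mod 3. -/
open Finset

private lemma sum_eq_frac (r x : Fin 3 → ℂ) (z : ℂ) (h : ∀ i, z ≠ x i ∧ z ≠ -x i) :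
    ∑ i, (r i / (z - x i) - r i / (z + x i)) =
      (2*(r 0*x 0 + r 1*x 1 + r 2*x 2)*z^4
        - 2*(r 0*x 0*((x 1)^2+(x 2)^2) + r 1*x 1*((x 2)^2+(x 0)^2)
            + r 2*x 2*((x 0)^2+(x 1)^2))*z^2
        + 2*(x 0*x 1*x 2)*(r 0*x 1*x 2 + r 1*x 2*x 0 + r 2*x 0*x 1))
      / ∏ i, (z ^ 2 - (x i) ^ 2) := by
  have d0 : z - x 0 ≠ 0 := sub_ne_zero.mpr (h 0).1
  have d1 : z - x 1 ≠ 0 := sub_ne_zero.mpr (h 1).1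
  have d2 : z - x 2 ≠ 0 := sub_ne_zero.mpr (h 2).1
  have e0 : z + x 0 ≠ 0 := fun hc => (h 0).2 (by linear_combination hc)
  have e1 : z + x 1 ≠ 0 := fun hc => (h 1).2 (by linear_combination hc)
  have e2 : z + x 2 ≠ 0 := fun hc => (h 2).2 (by linear_combination hc)
  have f0 : z ^ 2 - (x 0)^2 ≠ 0 := by
    intro hc; exact (mul_ne_zero d0 e0) (by linear_combination hc)
  have f1 : z ^ 2 - (x 1)^2 ≠ 0 := by
    intro hc; exact (mul_ne_zero d1 e1) (by linear_combination hc)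
  have f2 : z ^ 2 - (x 2)^2 ≠ 0 := by
    intro hc; exact (mul_ne_zero d2 e2) (by linear_combination hc)
  rw [Fin.sum_univ_three, Fin.prod_univ_three]
  field_simp
  ring

/-- Let `ω = ∑ᵢ (rᵢ/(z-xᵢ) - rᵢ/(z+xᵢ)) dz` be a meromorphic one-form on `ℙ¹` with
distinct nonzero poles `±x₁, ±x₂, ±x₃` and nonzero residues `rᵢ`.  Then `ω` has a zero
of order 4 at `z = 0`, i.e. `ω = C z⁴ dz / ∏ᵢ(z² - xᵢ²)` for some constant `C`, if and
only if `∑ rᵢ x_{i+1} x_{i+2} = 0` and `∑ rᵢ xᵢ (x_{i+1}² + x_{i+2}²) = 0` (indices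
mod 3). -/
theorem fourfold_zero_iff (r x : Fin 3 → ℂ)
    (hr : ∀ i, r i ≠ 0) (hx : ∀ i, x i ≠ 0)
    (hdist : ∀ i j, i ≠ j → x i ≠ x j ∧ x i ≠ -x j) :
    (∃ C : ℂ, ∀ z : ℂ, (∀ i, z ≠ x i ∧ z ≠ -x i) →
        ∑ i, (r i / (z - x i) - r i / (z + x i)) =
          C * z ^ 4 / ∏ i, (z ^ 2 - (x i) ^ 2)) ↔
      (∑ i, r i * x (i + 1) * x (i + 2) = 0 ∧
       ∑ i, r i * x i * ((x (i + 1)) ^ 2 + (x (i + 2)) ^ 2) = 0) := by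
  have hx0 := hx 0; have hx1 := hx 1; have hx2 := hx 2
  rw [Fin.sum_univ_three, Fin.sum_univ_three]
  simp only [show ((0:Fin 3)+1) = 1 from rfl, show ((0:Fin 3)+2) = 2 from rfl,
    show ((1:Fin 3)+1) = 2 from rfl, show ((1:Fin 3)+2) = 0 from rfl,
    show ((2:Fin 3)+1) = 0 from rfl, show ((2:Fin 3)+2) = 1 from rfl]
  constructor
  · rintro ⟨C, hC⟩
    set a : ℂ := 2*(r 0*x 0 + r 1*x 1 + r 2*x 2) - C with ha
    set b : ℂ := -2*(r 0*x 0*((x 1)^2+(x 2)^2) + r 1*x 1*((x 2)^2+(x 0)^2)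
        + r 2*x 2*((x 0)^2+(x 1)^2)) with hb
    set c : ℂ := 2*(x 0*x 1*x 2)*(r 0*x 1*x 2 + r 1*x 2*x 0 + r 2*x 0*x 1) with hc
    have key : ∀ z : ℂ, (∀ i, z ≠ x i ∧ z ≠ -x i) → a*z^4 + b*z^2 + c = 0 := by
      intro z hz
      have heq := hC z hz
      rw [sum_eq_frac r x z hz] at heq
      have d0 : z - x 0 ≠ 0 := sub_ne_zero.mpr (hz 0).1
      have d1 : z - x 1 ≠ 0 := sub_ne_zero.mpr (hz 1).1
      have d2 : z - x 2 ≠ 0 := sub_ne_zero.mpr (hz 2).1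
      have e0 : z + x 0 ≠ 0 := fun hcon => (hz 0).2 (by linear_combination hcon)
      have e1 : z + x 1 ≠ 0 := fun hcon => (hz 1).2 (by linear_combination hcon)
      have e2 : z + x 2 ≠ 0 := fun hcon => (hz 2).2 (by linear_combination hcon)
      have f0 : z ^ 2 - (x 0)^2 ≠ 0 := by
        intro hcon; exact (mul_ne_zero d0 e0) (by linear_combination hcon)
      have f1 : z ^ 2 - (x 1)^2 ≠ 0 := by
        intro hcon; exact (mul_ne_zero d1 e1) (by linear_combination hcon)
      have f2 : z ^ 2 - (x 2)^2 ≠ 0 := by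
        intro hcon; exact (mul_ne_zero d2 e2) (by linear_combination hcon)
      rw [Fin.prod_univ_three] at heq
      rw [div_eq_div_iff (by exact mul_ne_zero (mul_ne_zero f0 f1) f2)
        (by exact mul_ne_zero (mul_ne_zero f0 f1) f2)] at heq
      have hD : (z ^ 2 - (x 0)^2) * (z ^ 2 - (x 1)^2) * (z ^ 2 - (x 2)^2) ≠ 0 :=
        mul_ne_zero (mul_ne_zero f0 f1) f2
      have : (a*z^4 + b*z^2 + c) * ((z ^ 2 - (x 0)^2) * (z ^ 2 - (x 1)^2) * (z ^ 2 - (x 2)^2)) = 0 := by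
        rw [ha, hb, hc]; linear_combination heq
      exact (mul_eq_zero.mp this).resolve_right hD
    have hpoly : Polynomial.C a * Polynomial.X^4 + Polynomial.C b * Polynomial.X^2
        + Polynomial.C c = 0 := by
      apply Polynomial.eq_zero_of_infinite_isRoot
      have hinf : (({x 0, x 1, x 2, -(x 0), -(x 1), -(x 2)} : Set ℂ)ᶜ).Infinite :=
        Set.Finite.infinite_compl (Set.toFinite _)
      apply hinf.mono
      intro z hz
      simp only [Set.mem_compl_iff, Set.mem_insert_iff, Set.mem_singleton_iff,
          not_or] at hz
      have hz' : ∀ i, z ≠ x i ∧ z ≠ -x i := by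
        intro i; fin_cases i <;> exact ⟨by tauto, by tauto⟩
      simp only [Set.mem_setOf_eq, Polynomial.IsRoot, Polynomial.eval_add,
        Polynomial.eval_mul, Polynomial.eval_pow, Polynomial.eval_C, Polynomial.eval_X]
      exact key z hz'
    have hc0 : c = 0 := by
      have := congrArg (fun p => Polynomial.coeff p 0) hpoly
      simpa using this
    have hb0 : b = 0 := by
      have := congrArg (fun p => Polynomial.coeff p 2) hpoly
      simpa using this
    constructor
    · have : (2*(x 0*x 1*x 2)) * (r 0*x 1*x 2 + r 1*x 2*x 0 + r 2*x 0*x 1) = 0 := by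
        rw [hc] at hc0; linear_combination hc0
      have h2 : (2:ℂ)*(x 0*x 1*x 2) ≠ 0 := by
        simp [hx0, hx1, hx2]
      have := (mul_eq_zero.mp this).resolve_left h2
      linear_combination this
    · rw [hb] at hb0
      linear_combination (-1/2 : ℂ) * hb0
  · rintro ⟨h1, h2⟩
    refine ⟨2*(r 0*x 0 + r 1*x 1 + r 2*x 2), fun z hz => ?_⟩
    rw [sum_eq_frac r x z hz]
    congr 1
    linear_combination 2*(x 0*x 1*x 2)*h1 - 2*z^2*h2
end

section
/- Let Γ be a finite connected graph with no separating edges (i.e. 2-edge-connected), with edge set E. Let B ⊂ (ℚ*)^E be the subgroup of tuples (q_e) such that q_e = q_f whenever e and f lie in the same block of Γ. Then B is exactly the stabilizer, under the diagonal action of (ℚ*)^E on H¹(Γ, V; ℚ) given by (q_e)·[e₀*] = q_{e₀}[e₀*], of the image of the coboundary map δ : H⁰(V; ℚ)/H⁰(Γ; ℚ) → H¹(Γ, V; ℚ). -/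
/-- A (finite, possibly multi-) graph: edges carry a chosen orientation via
source and target maps. -/
structure Multigraph where
  V : Type
  E : Type
  src : E → V
  tgt : E → V

namespace Multigraph

variable (G : Multigraph)

/-- A walk in a multigraph, traversing edges in either direction. -/
inductive Walk : G.V → G.V → Type
  | nil (v : G.V) : Walk v v
  | cons {u x v : G.V} (e : G.E)
      (h : (G.src e = u ∧ G.tgt e = x) ∨ (G.src e = x ∧ G.tgt e = u))
      (w : Walk x v) : Walk u v

namespace Walk

variable {G}

/-- The list of edges traversed by a walk. -/
def edges : ∀ {u v : G.V}, G.Walk u v → List G.E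
  | _, _, .nil _ => []
  | _, _, .cons e _ w => e :: w.edges

/-- The list of vertices visited by a walk (starting vertex first). -/
def support : ∀ {u v : G.V}, G.Walk u v → List G.V
  | u, _, .nil _ => [u]
  | u, _, .cons _ _ w => u :: w.support

/-- A circuit: a nonempty closed walk with no repeated edge and no repeated vertex
other than the starting/ending one. -/
def IsCircuit {v : G.V} (w : G.Walk v v) : Prop :=
  w.edges ≠ [] ∧ w.edges.Nodup ∧ w.support.tail.Nodup

end Walk

/-- The multigraph is connected. -/
def Connected : Prop := ∀ u v : G.V, Nonempty (G.Walk u v)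

/-- An edge is separating if removing it disconnects the graph. -/
def IsSeparatingEdge (e : G.E) : Prop :=
  ∃ u v : G.V, ¬ ∃ w : G.Walk u v, e ∉ w.edges

/-- Two edges lie in the same block (maximal subgraph which cannot be disconnected by
removing a single vertex) iff they are equal or lie on a common circuit. -/
def SameBlock (e f : G.E) : Prop :=
  e = f ∨ ∃ (v : G.V) (w : G.Walk v v), w.IsCircuit ∧ e ∈ w.edges ∧ f ∈ w.edges

/-- The image of the coboundary map `δ : H⁰(V;ℚ)/H⁰(Γ;ℚ) → H¹(Γ,V;ℚ)`, where
`H¹(Γ,V;ℚ)` is identified with `ℚ^E` via the basis of dual edge classes `[e*]`. -/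
def coboundaryImage : Set (G.E → ℚ) :=
  {c | ∃ φ : G.V → ℚ, ∀ e, c e = φ (G.tgt e) - φ (G.src e)}

namespace Walk

variable {G : Multigraph}

/-- Concatenation of walks. -/
def append : ∀ {u v w : G.V}, G.Walk u v → G.Walk v w → G.Walk u w
  | _, _, _, .nil _, p => p
  | _, _, _, .cons e h w, p => .cons e h (w.append p)

/-- Reversal of a walk. -/
def reverse : ∀ {u v : G.V}, G.Walk u v → G.Walk v u
  | _, _, .nil v => .nil v
  | _, _, .cons e h w => w.reverse.append (.cons e (Or.symm h) (.nil _))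

/-- Weighted potential sum along a walk: `Σ p(eᵢ) (φ vᵢ - φ vᵢ₋₁)`. -/
def wsum (p : G.E → ℚ) (φ : G.V → ℚ) : ∀ {u v : G.V}, G.Walk u v → ℚ
  | _, _, .nil _ => 0
  | u, _, .cons (x := x) e _ w => p e * (φ x - φ u) + wsum p φ w

@[simp] lemma edges_nil (v : G.V) : (Walk.nil v : G.Walk v v).edges = [] := rfl

@[simp] lemma edges_cons {u x v : G.V} (e : G.E)
    (h : (G.src e = u ∧ G.tgt e = x) ∨ (G.src e = x ∧ G.tgt e = u)) (w : G.Walk x v) :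
    (Walk.cons e h w : G.Walk u v).edges = e :: w.edges := rfl

@[simp] lemma support_nil (v : G.V) : (Walk.nil v : G.Walk v v).support = [v] := rfl

@[simp] lemma support_cons {u x v : G.V} (e : G.E)
    (h : (G.src e = u ∧ G.tgt e = x) ∨ (G.src e = x ∧ G.tgt e = u)) (w : G.Walk x v) :
    (Walk.cons e h w : G.Walk u v).support = u :: w.support := rfl

@[simp] lemma wsum_nil (p : G.E → ℚ) (φ : G.V → ℚ) (v : G.V) :
    wsum p φ (Walk.nil v : G.Walk v v) = 0 := rfl

@[simp] lemma wsum_cons (p : G.E → ℚ) (φ : G.V → ℚ) {u x v : G.V} (e : G.E)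
    (h : (G.src e = u ∧ G.tgt e = x) ∨ (G.src e = x ∧ G.tgt e = u)) (w : G.Walk x v) :
    wsum p φ (Walk.cons e h w : G.Walk u v) = p e * (φ x - φ u) + wsum p φ w := rfl

lemma start_mem_support : ∀ {u v : G.V} (w : G.Walk u v), u ∈ w.support
  | _, _, .nil _ => List.mem_singleton.2 rfl
  | _, _, .cons _ _ _ => List.mem_cons_self

lemma end_mem_support : ∀ {u v : G.V} (w : G.Walk u v), v ∈ w.support
  | _, _, .nil _ => List.mem_singleton.2 rfl
  | _, _, .cons _ _ w => List.mem_cons_of_mem _ (end_mem_support w)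

lemma mem_support_of_mem_edges :
    ∀ {u v : G.V} (w : G.Walk u v) {e : G.E}, e ∈ w.edges →
      G.src e ∈ w.support ∧ G.tgt e ∈ w.support := by
  intro u v w
  induction w with
  | nil v => intro e he; simp [edges] at he
  | cons f h w ih =>
    intro e he
    rw [edges, List.mem_cons] at he
    rcases he with rfl | he
    · rcases h with ⟨hs, ht⟩ | ⟨hs, ht⟩ <;>
        simp [support, hs, ht, start_mem_support]
    · obtain ⟨h1, h2⟩ := ih he
      exact ⟨List.mem_cons_of_mem _ h1, List.mem_cons_of_mem _ h2⟩

lemma edges_nodup_of_support_nodup :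
    ∀ {u v : G.V} (w : G.Walk u v), w.support.Nodup → w.edges.Nodup := by
  intro u v w
  induction w with
  | nil v => intro _; simp [edges]
  | cons f h w ih =>
    intro hnd
    rw [support, List.nodup_cons] at hnd
    rw [edges, List.nodup_cons]
    refine ⟨fun hf => ?_, ih hnd.2⟩
    have := mem_support_of_mem_edges w hf
    rcases h with ⟨hs, _⟩ | ⟨_, ht⟩
    · exact hnd.1 (hs ▸ this.1)
    · exact hnd.1 (ht ▸ this.2)

lemma edges_nil_of_closed_support_nodup :
    ∀ {u : G.V} (w : G.Walk u u), w.support.Nodup → w.edges = [] := by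
  intro u w hnd
  cases w with
  | nil => rfl
  | cons f h w =>
    exfalso
    rw [support, List.nodup_cons] at hnd
    exact hnd.1 (end_mem_support w)

/-- If an open walk with nodup support contains an edge whose endpoints are the
two ends of the walk, then that edge is the whole walk. -/
lemma edges_eq_single :
    ∀ {x u : G.V} (w : G.Walk x u) (e : G.E),
      ((G.src e = u ∧ G.tgt e = x) ∨ (G.src e = x ∧ G.tgt e = u)) →
      w.support.Nodup → e ∈ w.edges → w.edges = [e] := by
  intro x u w
  induction w with
  | nil v => intro e _ _ he; simp [edges] at he
  | cons f hf w ih =>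
    rename_i x' y u'
    intro e h hnd he
    rw [support, List.nodup_cons] at hnd
    rw [edges, List.mem_cons] at he
    rcases he with rfl | he
    · -- leading edge is e; show the rest is empty
      have hyu : y = u' := by
        rcases h with ⟨hs, ht⟩ | ⟨hs, ht⟩ <;> rcases hf with ⟨hs', ht'⟩ | ⟨hs', ht'⟩ <;> grind
      subst hyu
      have hnil : w.edges = [] := edges_nil_of_closed_support_nodup w hnd.2
      rw [edges, hnil]
    · exfalso
      have hmem := mem_support_of_mem_edges w he
      rcases h with ⟨hs, ht⟩ | ⟨hs, ht⟩
      · exact hnd.1 (ht ▸ hmem.2)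
      · exact hnd.1 (hs ▸ hmem.1)

/-- On a closed walk whose interior support has no duplicates, a block-constant
weight is constant on all edges. -/
lemma closed_const (p : G.E → ℚ) (hb : ∀ e f : G.E, G.SameBlock e f → p e = p f)
    {u : G.V} (w : G.Walk u u) (hnd : w.support.tail.Nodup) :
    ∀ a ∈ w.edges, ∀ b ∈ w.edges, p a = p b := by
  cases w with
  | nil => intro a ha; simp [edges] at ha
  | cons f hf w =>
    rename_i x
    have hnd' : w.support.Nodup := by simpa [support] using hnd
    by_cases hfin : f ∈ w.edges
    · -- degenerate: the walk is f twice
      have hfe : w.edges = [f] := edges_eq_single w f hf hnd' hfin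
      intro a ha b hb'
      rw [edges, hfe] at ha hb'
      simp only [List.mem_cons, List.not_mem_nil, or_false] at ha hb'
      rcases ha with rfl | rfl <;> rcases hb' with rfl | rfl <;> rfl
    · -- genuine circuit
      have hcirc : (Walk.cons f hf w).IsCircuit := by
        refine ⟨by simp [edges], ?_, hnd⟩
        rw [edges, List.nodup_cons]
        exact ⟨hfin, edges_nodup_of_support_nodup w hnd'⟩
      intro a ha b hb'
      exact hb a b (Or.inr ⟨u, Walk.cons f hf w, hcirc, ha, hb'⟩)

lemma wsum_append (p : G.E → ℚ) (φ : G.V → ℚ) :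
    ∀ {u v w : G.V} (w₁ : G.Walk u v) (w₂ : G.Walk v w),
      wsum p φ (w₁.append w₂) = wsum p φ w₁ + wsum p φ w₂ := by
  intro u v w w₁
  induction w₁ with
  | nil v => intro w₂; simp [append, wsum]
  | cons e h w₁ ih => intro w₂; rw [append, wsum_cons, wsum_cons, ih]; ring

lemma edges_append :
    ∀ {u v w : G.V} (w₁ : G.Walk u v) (w₂ : G.Walk v w),
      (w₁.append w₂).edges = w₁.edges ++ w₂.edges := by
  intro u v w w₁
  induction w₁ with
  | nil v => intro w₂; simp [append, edges]
  | cons e h w₁ ih => intro w₂; rw [append, edges, edges, ih]; rfl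

lemma wsum_reverse (p : G.E → ℚ) (φ : G.V → ℚ) :
    ∀ {u v : G.V} (w : G.Walk u v), wsum p φ w.reverse = - wsum p φ w := by
  intro u v w
  induction w with
  | nil v => simp [reverse]
  | cons e h w ih =>
    rw [reverse, wsum_append, ih, wsum_cons, wsum_cons, wsum_nil]; ring

lemma wsum_const (p : G.E → ℚ) (φ : G.V → ℚ) (Q : ℚ) :
    ∀ {u v : G.V} (w : G.Walk u v), (∀ a ∈ w.edges, p a = Q) →
      wsum p φ w = Q * (φ v - φ u) := by
  intro u v w
  induction w with
  | nil v => intro _; simp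
  | cons e h w ih =>
    intro hc
    rw [wsum_cons, ih (fun a ha => hc a (List.mem_cons_of_mem _ ha)),
      hc e (List.mem_cons_self)]
    ring

/-- If `e ↦ p e (φ tgt - φ src)` has potential `ψ`, the weighted sum telescopes. -/
lemma wsum_rep (p : G.E → ℚ) (φ ψ : G.V → ℚ)
    (hψ : ∀ e, p e * (φ (G.tgt e) - φ (G.src e)) = ψ (G.tgt e) - ψ (G.src e)) :
    ∀ {u v : G.V} (w : G.Walk u v), wsum p φ w = ψ v - ψ u := by
  intro u v w
  induction w with
  | nil v => simp
  | cons e h w ih =>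
    rename_i u' x v'
    rw [wsum_cons, ih]
    have : p e * (φ x - φ u') = ψ x - ψ u' := by
      rcases h with ⟨hs, ht⟩ | ⟨hs, ht⟩
      · rw [← hs, ← ht]; exact hψ e
      · rw [← hs, ← ht]; have := hψ e; linarith [hψ e]
    rw [this]; ring

/-- Split a walk at a vertex of its support. -/
lemma split (p : G.E → ℚ) (φ : G.V → ℚ) :
    ∀ {u v : G.V} (w : G.Walk u v) (x : G.V), x ∈ w.support →
      ∃ (w₁ : G.Walk u x) (w₂ : G.Walk x v),
        wsum p φ w = wsum p φ w₁ + wsum p φ w₂ ∧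
        w.edges.length = w₁.edges.length + w₂.edges.length := by
  intro u v w
  induction w with
  | nil v =>
    intro x hx
    rw [support, List.mem_singleton] at hx
    subst hx
    exact ⟨.nil x, .nil x, by simp, by simp⟩
  | cons e h w ih =>
    rename_i u' y v'
    intro x hx
    by_cases hxu : x = u'
    · subst hxu
      exact ⟨.nil x, .cons e h w, by simp, by simp⟩
    · rw [support, List.mem_cons] at hx
      rcases hx with rfl | hx
      · exact absurd rfl hxu
      · obtain ⟨w₁, w₂, hsum, hlen⟩ := ih x hx
        refine ⟨.cons e h w₁, w₂, ?_, ?_⟩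
        · rw [wsum_cons, wsum_cons, hsum]; ring
        · rw [edges, edges, List.length_cons, List.length_cons, hlen]; omega

/-- From a walk with repeated support vertex, extract a nonempty closed subwalk. -/
lemma extract (p : G.E → ℚ) (φ : G.V → ℚ) :
    ∀ {u v : G.V} (w : G.Walk u v), ¬ w.support.Nodup →
      ∃ (x : G.V) (w₂ : G.Walk x x) (wo : G.Walk u v),
        w₂.edges ≠ [] ∧
        wsum p φ w = wsum p φ w₂ + wsum p φ wo ∧
        w.edges.length = w₂.edges.length + wo.edges.length := by
  intro u v w
  induction w with
  | nil v => intro hnd; exact absurd (by simp [support]) hnd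
  | cons e h w ih =>
    rename_i u' y v'
    intro hnd
    rw [support, List.nodup_cons] at hnd
    push_neg at hnd
    by_cases hu : u' ∈ w.support
    · obtain ⟨wa, wb, hsum, hlen⟩ := split p φ w u' hu
      refine ⟨u', .cons e h wa, wb, by simp, ?_, ?_⟩
      · rw [wsum_cons, wsum_cons, hsum]; ring
      · rw [edges, edges, List.length_cons, List.length_cons, hlen]; omega
    · obtain ⟨x, w₂, wo, hne, hsum, hlen⟩ := ih (hnd hu)
      refine ⟨x, w₂, .cons e h wo, hne, ?_, ?_⟩
      · rw [wsum_cons, wsum_cons, hsum]; ring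
      · rw [edges, edges, List.length_cons, List.length_cons, hlen]; omega

/-- Block-constant weights have vanishing weighted sums over closed walks. -/
lemma wsum_closed (p : G.E → ℚ) (hb : ∀ e f : G.E, G.SameBlock e f → p e = p f)
    (φ : G.V → ℚ) :
    ∀ (n : ℕ) {u : G.V} (w : G.Walk u u), w.edges.length ≤ n → wsum p φ w = 0 := by
  intro n
  induction n with
  | zero =>
    intro u w hw
    cases w with
    | nil => rfl
    | cons e h w => rw [edges] at hw; simp at hw
  | succ n ih =>
    intro u w hw
    by_cases hnd : w.support.tail.Nodup
    · cases w with
      | nil => rfl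
      | cons e h w' =>
        have hc := closed_const p hb (Walk.cons e h w') hnd
        rw [wsum_const p φ (p e) _ (fun a ha => hc a ha e (List.mem_cons_self))]
        ring
    · cases w with
      | nil => exact absurd (by simp [support]) hnd
      | cons e h w' =>
        have hnd' : ¬ w'.support.Nodup := by simpa [support] using hnd
        obtain ⟨x, w₂, wo, hne, hsum, hlen⟩ := extract p φ w' hnd'
        have h2 : w₂.edges.length ≥ 1 := by
          cases hh : w₂.edges with
          | nil => exact absurd hh hne
          | cons a l => simp
        rw [edges, List.length_cons] at hw
        have e1 : wsum p φ w₂ = 0 := ih w₂ (by omega)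
        have e2 : wsum p φ (Walk.cons e h wo) = 0 := by
          refine ih (Walk.cons e h wo) ?_
          rw [edges, List.length_cons]; omega
        rw [wsum_cons, hsum]
        rw [wsum_cons] at e2
        linarith

section InOut

open Classical

/-- Total weight of edges entering `z` along the walk. -/
noncomputable def inq (p : G.E → ℚ) (z : G.V) : ∀ {u v : G.V}, G.Walk u v → ℚ
  | _, _, .nil _ => 0
  | _, _, .cons (x := x) e _ w => (if x = z then p e else 0) + inq p z w

/-- Total weight of edges leaving `z` along the walk. -/
noncomputable def outq (p : G.E → ℚ) (z : G.V) : ∀ {u v : G.V}, G.Walk u v → ℚ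
  | u, _, .cons e _ w => (if u = z then p e else 0) + outq p z w
  | _, _, .nil _ => 0

@[simp] lemma inq_nil (p : G.E → ℚ) (z v : G.V) :
    inq p z (Walk.nil v : G.Walk v v) = 0 := rfl

@[simp] lemma inq_cons (p : G.E → ℚ) (z : G.V) {u x v : G.V} (e : G.E)
    (h : (G.src e = u ∧ G.tgt e = x) ∨ (G.src e = x ∧ G.tgt e = u)) (w : G.Walk x v) :
    inq p z (Walk.cons e h w : G.Walk u v) = (if x = z then p e else 0) + inq p z w := rfl

@[simp] lemma outq_nil (p : G.E → ℚ) (z v : G.V) :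
    outq p z (Walk.nil v : G.Walk v v) = 0 := rfl

@[simp] lemma outq_cons (p : G.E → ℚ) (z : G.V) {u x v : G.V} (e : G.E)
    (h : (G.src e = u ∧ G.tgt e = x) ∨ (G.src e = x ∧ G.tgt e = u)) (w : G.Walk x v) :
    outq p z (Walk.cons e h w : G.Walk u v) = (if u = z then p e else 0) + outq p z w := rfl

lemma wsum_ind (p : G.E → ℚ) (z : G.V) :
    ∀ {u v : G.V} (w : G.Walk u v),
      wsum p (fun y => if y = z then 1 else 0) w = inq p z w - outq p z w := by
  intro u v w
  induction w with
  | nil v => simp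
  | cons e h w ih =>
    rename_i u' x v'
    rw [wsum_cons, inq_cons, outq_cons, ih]
    by_cases h1 : x = z <;> by_cases h2 : u' = z <;> simp [h1, h2] <;> try ring

lemma inq_eq_zero (p : G.E → ℚ) (z : G.V) :
    ∀ {u v : G.V} (w : G.Walk u v), z ∉ w.support.tail → inq p z w = 0 := by
  intro u v w
  induction w with
  | nil v => intro _; rfl
  | cons e h w ih =>
    rename_i u' x v'
    intro hz
    rw [support] at hz
    simp only [List.tail_cons] at hz
    have hx : x ≠ z := fun hh => hz (hh ▸ start_mem_support w)
    have : z ∉ w.support.tail := fun hh => hz (List.mem_of_mem_tail hh)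
    rw [inq_cons, if_neg hx, ih this]; ring

lemma outq_eq_zero (p : G.E → ℚ) (z : G.V) :
    ∀ {u v : G.V} (w : G.Walk u v), z ∉ w.support → outq p z w = 0 := by
  intro u v w
  induction w with
  | nil v => intro _; rfl
  | cons e h w ih =>
    rename_i u' x v'
    intro hz
    rw [support, List.mem_cons] at hz
    push_neg at hz
    rw [outq_cons, if_neg (Ne.symm hz.1), ih hz.2]; ring

/-- The chain lemma: along a nodup walk ending at `v`, if at every interior
vertex the in- and out-weights balance (with an initial credit `Q` at the
start), then every edge has weight `Q`. -/
lemma chain (p : G.E → ℚ) (v : G.V) :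
    ∀ (y : G.V) (s : G.Walk y v) (Q : ℚ), s.support.Nodup →
      (∀ z, z ∈ s.support → z ≠ v →
        inq p z s + (if y = z then Q else 0) = outq p z s) →
      ∀ a ∈ s.edges, p a = Q := by
  intro y s
  induction s with
  | nil v => intro Q _ _ a ha; simp [edges] at ha
  | cons e h s ih =>
    rename_i y' x v'
    intro Q hnd hz a ha
    rw [support, List.nodup_cons] at hnd
    have hyv : y' ≠ v' := by
      intro hh
      exact hnd.1 (hh ▸ end_mem_support s)
    have hyx : x ≠ y' := by
      intro hh
      exact hnd.1 (hh ▸ start_mem_support s)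
    -- evaluate the balance at y' : Q = p e
    have hQ : Q = p e := by
      have h1 := hz y' (List.mem_cons_self) hyv
      rw [inq_cons, outq_cons, if_pos rfl, if_pos rfl, if_neg hyx,
        inq_eq_zero p y' s (fun hh => hnd.1 (List.mem_of_mem_tail hh)),
        outq_eq_zero p y' s hnd.1] at h1
      linarith
    rw [edges, List.mem_cons] at ha
    rcases ha with rfl | ha
    · exact hQ.symm
    · -- recurse with credit p e at x
      refine (ih (p e) hnd.2 ?_ a ha).trans hQ.symm
      intro z hzs hzv
      have hzy : y' ≠ z := fun hh => hnd.1 (hh ▸ hzs)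
      have h1 := hz z (List.mem_cons_of_mem _ hzs) hzv
      rw [inq_cons, outq_cons, if_neg hzy, if_neg hzy] at h1
      by_cases hxz : x = z
      · rw [if_pos hxz] at h1 ⊢
        linarith
      · rw [if_neg hxz] at h1 ⊢
        linarith

end InOut

end Walk

/-- Key lemma: if `p` is constant on blocks, then for any `φ` the scaled
coboundary `e ↦ p e (φ tgt - φ src)` is again a coboundary. -/
lemma scaled_coboundary {G : Multigraph} [Nonempty G.V] (hconn : G.Connected)
    (p : G.E → ℚ) (hb : ∀ e f : G.E, G.SameBlock e f → p e = p f) (φ : G.V → ℚ) :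
    (fun e => p e * (φ (G.tgt e) - φ (G.src e))) ∈ G.coboundaryImage := by
  classical
  set v₀ : G.V := Classical.arbitrary G.V with hv₀
  have hclosed : ∀ {u : G.V} (w : G.Walk u u), Walk.wsum p φ w = 0 := by
    intro u w
    exact Walk.wsum_closed p hb φ w.edges.length w le_rfl
  -- choose reference walks
  have hwalk : ∀ v : G.V, G.Walk v₀ v := fun v => Classical.choice (hconn v₀ v)
  set ψ : G.V → ℚ := fun v => Walk.wsum p φ (hwalk v) with hψ
  have hwd : ∀ (v : G.V) (w : G.Walk v₀ v), Walk.wsum p φ w = ψ v := by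
    intro v w
    have := hclosed (w.append (hwalk v).reverse)
    rw [Walk.wsum_append, Walk.wsum_reverse] at this
    simp only [hψ]
    linarith
  refine ⟨ψ, fun e => ?_⟩
  have h1 : ψ (G.src e) = Walk.wsum p φ (hwalk (G.src e)) := rfl
  have h2 : ψ (G.tgt e) =
      Walk.wsum p φ ((hwalk (G.src e)).append
        (Walk.cons e (Or.inl ⟨rfl, rfl⟩) (Walk.nil (G.tgt e)))) :=
    (hwd _ _).symm
  rw [h2, Walk.wsum_append, h1]
  show p e * (φ (G.tgt e) - φ (G.src e)) = _
  rw [Walk.wsum_cons, Walk.wsum_nil]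
  ring

end Multigraph

open Multigraph Multigraph.Walk

/-- Let `Γ` be a finite connected graph with no separating edges.  A tuple
`q ∈ (ℚ*)^E`, acting diagonally on `H¹(Γ,V;ℚ) ≅ ℚ^E` by `q·[e*] = q_e [e*]`,
stabilizes the image of the coboundary map `δ : H⁰(V;ℚ)/H⁰(Γ;ℚ) → H¹(Γ,V;ℚ)`
if and only if `q_e = q_f` whenever `e` and `f` lie in the same block of `Γ`:
i.e. the subgroup `B` is exactly the stabilizer of `Im δ`. -/
theorem block_subgroup_eq_stabilizer (G : Multigraph) [Fintype G.V] [Fintype G.E]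
    (hconn : G.Connected) (hsep : ∀ e : G.E, ¬ G.IsSeparatingEdge e)
    (q : G.E → ℚ) (hq : ∀ e, q e ≠ 0) :
    (∀ e f : G.E, G.SameBlock e f → q e = q f) ↔
      (fun c : G.E → ℚ => fun e => q e * c e) '' G.coboundaryImage = G.coboundaryImage := by
  classical
  constructor
  · intro hb
    by_cases hV : Nonempty G.V
    · haveI := hV
      apply Set.Subset.antisymm
      · rintro c' ⟨c, ⟨φ, hφ⟩, rfl⟩
        show (fun e => q e * c e) ∈ G.coboundaryImage
        have hc : (fun e => q e * c e) =
            fun e => q e * (φ (G.tgt e) - φ (G.src e)) := by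
          funext e; rw [hφ]
        rw [hc]
        exact scaled_coboundary hconn q hb φ
      · rintro c ⟨φ, hφ⟩
        refine ⟨fun e => (q e)⁻¹ * c e, ?_, ?_⟩
        · have hb' : ∀ e f, G.SameBlock e f → (q e)⁻¹ = (q f)⁻¹ := by
            intro e f h; rw [hb e f h]
          have hc : (fun e => (q e)⁻¹ * c e) =
              fun e => (q e)⁻¹ * (φ (G.tgt e) - φ (G.src e)) := by
            funext e; rw [hφ]
          rw [hc]
          exact scaled_coboundary hconn _ hb' φ
        · funext e
          exact mul_inv_cancel_left₀ (hq e) (c e)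
    · haveI : IsEmpty G.V := not_nonempty_iff.mp hV
      haveI : IsEmpty G.E := ⟨fun e => IsEmpty.false (G.src e)⟩
      have hD : G.coboundaryImage = Set.univ :=
        Set.eq_univ_of_forall fun c => ⟨fun v => isEmptyElim v, fun e => isEmptyElim e⟩
      rw [hD]
      apply Set.eq_univ_of_forall
      intro c
      exact ⟨c, Set.mem_univ c, funext fun e => isEmptyElim e⟩
  · intro himg e f hef
    rcases hef with rfl | ⟨v, w, hw, he, hf⟩
    · rfl
    have Hφ : ∀ φ : G.V → ℚ, wsum q φ w = 0 := by
      intro φ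
      have hmem : (fun e' => q e' * (φ (G.tgt e') - φ (G.src e'))) ∈
          G.coboundaryImage := by
        rw [← himg]
        exact ⟨fun e' => φ (G.tgt e') - φ (G.src e'), ⟨φ, fun _ => rfl⟩, rfl⟩
      obtain ⟨ψ, hψ⟩ := hmem
      rw [wsum_rep q φ ψ (fun e' => hψ e') w]
      ring
    have Hz : ∀ z, inq q z w = outq q z w := by
      intro z
      have h0 := Hφ (fun y => if y = z then 1 else 0)
      rw [wsum_ind] at h0
      linarith
    obtain ⟨hne, hnde, hnds⟩ := hw
    cases w with
    | nil => exact absurd rfl hne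
    | cons e₁ h₁ w₁ =>
      rename_i x
      have hnd : w₁.support.Nodup := by
        simpa [Multigraph.Walk.support] using hnds
      have hall : ∀ a ∈ w₁.edges, q a = q e₁ := by
        refine chain q v x w₁ (q e₁) hnd ?_
        intro z hzs hzv
        have h1 := Hz z
        rw [inq_cons, outq_cons, if_neg (show ¬ (v = z) from fun hh => hzv hh.symm)] at h1
        linarith
      have hq' : ∀ a ∈ (Walk.cons e₁ h₁ w₁).edges, q a = q e₁ := by
        intro a ha
        rw [Multigraph.Walk.edges, List.mem_cons] at ha
        rcases ha with rfl | ha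
        · rfl
        · exact hall a ha
      rw [hq' e he, hq' f hf]
end

section
/- Let r₁, r₂, r₃, r₄ be complex numbers with r₄ = -(r₁+r₂+r₃) and with r₁, r₂, r₃ linearly independent over ℚ, and in particular r₃/r₄ ≠ ±1. Then the system of equations Σᵢ₌₁⁴ rᵢ ζᵢ = 0 and Σᵢ₌₁⁴ rᵢ ζᵢ⁻¹ = 0 with ζ₁ = 1 has no solution family of the form ζᵢ = ηᵢ t^{aᵢ} (i = 2,3,4) valid for all t ∈ ℂ*, where η₂, η₃, η₄ ∈ ℂ* are fixed and (a₂,a₃,a₄) ∈ ℤ³ is not all zero. -/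
/-- The family of characters `t ↦ t^b` on `ℂˣ`. -/
noncomputable def chz (b : ℤ) : ℂˣ →* ℂ := (Units.coeHom ℂ).comp (zpowGroupHom b)

lemma chz_apply (b : ℤ) (u : ℂˣ) : chz b u = (u : ℂ) ^ b := by
  simp [chz, zpowGroupHom]

lemma chz_inj : Function.Injective chz := by
  intro b b' h
  have h2 : ((Units.mk0 (2:ℂ) two_ne_zero : ℂˣ) : ℂ) ^ b
      = ((Units.mk0 (2:ℂ) two_ne_zero : ℂˣ) : ℂ) ^ b' := by
    rw [← chz_apply, ← chz_apply, h]
  simp only [Units.val_mk0] at h2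
  have h3 : ‖(2:ℂ) ^ b‖ = ‖(2:ℂ) ^ b'‖ := by rw [h2]
  rw [norm_zpow, norm_zpow] at h3
  norm_num at h3
  exact h3

lemma chz_li : LinearIndependent ℂ (fun b : ℤ => ⇑(chz b)) :=
  (linearIndependent_monoidHom ℂˣ ℂ).comp chz chz_inj

/-- Coefficient extraction for a 4-term exponential sum vanishing on `ℂˣ`. -/
lemma key (r₁ c₂ c₃ c₄ : ℂ) (b₂ b₃ b₄ : ℤ)
    (h : ∀ u : ℂˣ, r₁ + c₂ * (u:ℂ)^b₂ + c₃ * (u:ℂ)^b₃ + c₄ * (u:ℂ)^b₄ = 0) (e : ℤ) :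
    (if (0:ℤ) = e then r₁ else 0) + (if b₂ = e then c₂ else 0)
      + (if b₃ = e then c₃ else 0) + (if b₄ = e then c₄ else 0) = 0 := by
  have hl : (Finsupp.single (0:ℤ) r₁ + Finsupp.single b₂ c₂ + Finsupp.single b₃ c₃
      + Finsupp.single b₄ c₄) = 0 := by
    apply linearIndependent_iff.mp chz_li
    rw [map_add, map_add, map_add]
    simp only [Finsupp.linearCombination_single]
    funext u
    simpa [chz_apply] using h u
  have h5 := DFunLike.congr_fun hl e
  simp only [Finsupp.add_apply, Finsupp.single_apply, Finsupp.coe_zero, Pi.zero_apply] at h5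
  exact h5

/-- If `x·p + y·q = 0` and `x/p + y/q = 0` with `p,q ≠ 0` then `x = ±y`. -/
lemma pair_lemma (x y p q : ℂ) (hp : p ≠ 0) (hq : q ≠ 0)
    (h1 : x * p + y * q = 0) (h2 : x * p⁻¹ + y * q⁻¹ = 0) : x = y ∨ x = -y := by
  have h2' : x * q + y * p = 0 := by
    field_simp at h2
    linear_combination h2
  have h3 : (x ^ 2 - y ^ 2) * (p * q) = 0 := by
    linear_combination (x * q) * h1 - (y * q) * h2'
  have h4 : x ^ 2 = y ^ 2 := by
    rcases mul_eq_zero.mp h3 with h | h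
    · linear_combination h
    · exact absurd h (mul_ne_zero hp hq)
  exact sq_eq_sq_iff_eq_or_eq_neg.mp h4

/-- Let `r₁,r₂,r₃,r₄ ∈ ℂ` with `r₄ = -(r₁+r₂+r₃)` and `r₁,r₂,r₃` linearly independent
over `ℚ`.  Then the system `∑ᵢ rᵢζᵢ = 0`, `∑ᵢ rᵢζᵢ⁻¹ = 0` with `ζ₁ = 1` admits no
one-parameter family of solutions `ζᵢ = ηᵢ t^{aᵢ}` (`i = 2,3,4`) valid for all
`t ∈ ℂ*`, with fixed `η₂,η₃,η₄ ∈ ℂ*` and `(a₂,a₃,a₄) ∈ ℤ³` not all zero. -/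
theorem no_torus_translate_of_solutions (r₁ r₂ r₃ r₄ : ℂ)
    (h4 : r₄ = -(r₁ + r₂ + r₃))
    (hli : LinearIndependent ℚ ![r₁, r₂, r₃]) :
    ¬ ∃ (η₂ η₃ η₄ : ℂ) (a₂ a₃ a₄ : ℤ),
        η₂ ≠ 0 ∧ η₃ ≠ 0 ∧ η₄ ≠ 0 ∧ ¬(a₂ = 0 ∧ a₃ = 0 ∧ a₄ = 0) ∧
        ∀ t : ℂ, t ≠ 0 →
          r₁ + r₂ * (η₂ * t ^ a₂) + r₃ * (η₃ * t ^ a₃) + r₄ * (η₄ * t ^ a₄) = 0 ∧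
          r₁ + r₂ * (η₂ * t ^ a₂)⁻¹ + r₃ * (η₃ * t ^ a₃)⁻¹ + r₄ * (η₄ * t ^ a₄)⁻¹ = 0 := by
  rintro ⟨η₂, η₃, η₄, a₂, a₃, a₄, hη₂, hη₃, hη₄, ha, hsol⟩
  subst h4
  -- nontrivial rational relations are impossible
  have hrel : ∀ q₁ q₂ q₃ : ℚ, (q₁:ℂ)*r₁ + (q₂:ℂ)*r₂ + (q₃:ℂ)*r₃ = 0 →
      q₁ = 0 ∧ q₂ = 0 ∧ q₃ = 0 := by
    intro q₁ q₂ q₃ h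
    have h0 := Fintype.linearIndependent_iff.mp hli ![q₁, q₂, q₃] ?_
    · exact ⟨h0 0, h0 1, h0 2⟩
    · simpa [Fin.sum_univ_three, Rat.smul_def] using h
  -- the two vanishing exponential sums
  have H1 : ∀ u : ℂˣ, r₁ + (r₂*η₂) * (u:ℂ)^a₂ + (r₃*η₃) * (u:ℂ)^a₃
      + ((-(r₁+r₂+r₃))*η₄) * (u:ℂ)^a₄ = 0 := by
    intro u
    linear_combination (hsol u u.ne_zero).1
  have H2 : ∀ u : ℂˣ, r₁ + (r₂*η₂⁻¹) * (u:ℂ)^(-a₂) + (r₃*η₃⁻¹) * (u:ℂ)^(-a₃)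
      + ((-(r₁+r₂+r₃))*η₄⁻¹) * (u:ℂ)^(-a₄) = 0 := by
    intro u
    have h := (hsol u u.ne_zero).2
    rw [mul_inv, mul_inv, mul_inv, ← zpow_neg, ← zpow_neg, ← zpow_neg] at h
    linear_combination h
  have E := key r₁ (r₂*η₂) (r₃*η₃) ((-(r₁+r₂+r₃))*η₄) a₂ a₃ a₄ H1
  have F := key r₁ (r₂*η₂⁻¹) (r₃*η₃⁻¹) ((-(r₁+r₂+r₃))*η₄⁻¹) (-a₂) (-a₃) (-a₄) H2
  by_cases h2 : a₂ = 0
  · by_cases h3 : a₃ = 0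
    · -- a₄ ≠ 0 : singleton class {4}
      have h4' : a₄ ≠ 0 := fun h => ha ⟨h2, h3, h⟩
      have hE := E a₄
      rw [if_neg (show ¬(0:ℤ) = a₄ by omega), if_neg (show ¬a₂ = a₄ by omega),
        if_neg (show ¬a₃ = a₄ by omega), if_pos rfl] at hE
      have hc : (-(r₁+r₂+r₃)) = 0 :=
        (mul_eq_zero.mp (by linear_combination hE)).resolve_right hη₄
      exact one_ne_zero (hrel 1 1 1 (by push_cast; linear_combination -hc)).1
    · by_cases h34 : a₄ = a₃
      · -- pair class {3,4}
        have hE := E a₃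
        rw [if_neg (show ¬(0:ℤ) = a₃ by omega), if_neg (show ¬a₂ = a₃ by omega),
          if_pos rfl, if_pos h34] at hE
        have hF := F (-a₃)
        rw [if_neg (show ¬(0:ℤ) = -a₃ by omega), if_neg (show ¬-a₂ = -a₃ by omega),
          if_pos rfl, if_pos (show -a₄ = -a₃ by omega)] at hF
        rcases pair_lemma r₃ (-(r₁+r₂+r₃)) η₃ η₄ hη₃ hη₄ (by linear_combination hE)
            (by linear_combination hF) with h | h
        · exact one_ne_zero (hrel 1 1 2 (by push_cast; linear_combination h)).1
        · exact one_ne_zero (hrel 1 1 0 (by push_cast; linear_combination -h)).1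
      · -- singleton class {3}
        have hE := E a₃
        rw [if_neg (show ¬(0:ℤ) = a₃ by omega), if_neg (show ¬a₂ = a₃ by omega),
          if_pos rfl, if_neg h34] at hE
        have hc : r₃ = 0 := (mul_eq_zero.mp (by linear_combination hE)).resolve_right hη₃
        exact one_ne_zero (hrel 0 0 1 (by push_cast; linear_combination hc)).2.2
  · by_cases h32 : a₃ = a₂
    · by_cases h42 : a₄ = a₂
      · -- all exponents equal and nonzero : singleton class {1}
        have hE := E 0
        rw [if_pos rfl, if_neg h2, if_neg (show ¬a₃ = 0 by omega),
          if_neg (show ¬a₄ = 0 by omega)] at hE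
        exact one_ne_zero (hrel 1 0 0 (by push_cast; linear_combination hE)).1
      · -- pair class {2,3}
        have hE := E a₂
        rw [if_neg (show ¬(0:ℤ) = a₂ by omega), if_pos rfl, if_pos h32, if_neg h42] at hE
        have hF := F (-a₂)
        rw [if_neg (show ¬(0:ℤ) = -a₂ by omega), if_pos rfl,
          if_pos (show -a₃ = -a₂ by omega), if_neg (show ¬-a₄ = -a₂ by omega)] at hF
        rcases pair_lemma r₂ r₃ η₂ η₃ hη₂ hη₃ (by linear_combination hE)
            (by linear_combination hF) with h | h
        · exact one_ne_zero (hrel 0 1 (-1) (by push_cast; linear_combination h)).2.1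
        · exact one_ne_zero (hrel 0 1 1 (by push_cast; linear_combination h)).2.1
    · by_cases h42 : a₄ = a₂
      · -- pair class {2,4}
        have hE := E a₂
        rw [if_neg (show ¬(0:ℤ) = a₂ by omega), if_pos rfl, if_neg h32, if_pos h42] at hE
        have hF := F (-a₂)
        rw [if_neg (show ¬(0:ℤ) = -a₂ by omega), if_pos rfl,
          if_neg (show ¬-a₃ = -a₂ by omega), if_pos (show -a₄ = -a₂ by omega)] at hF
        rcases pair_lemma r₂ (-(r₁+r₂+r₃)) η₂ η₄ hη₂ hη₄ (by linear_combination hE)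
            (by linear_combination hF) with h | h
        · exact one_ne_zero (hrel 1 2 1 (by push_cast; linear_combination h)).1
        · exact one_ne_zero (hrel 1 0 1 (by push_cast; linear_combination -h)).1
      · -- singleton class {2}
        have hE := E a₂
        rw [if_neg (show ¬(0:ℤ) = a₂ by omega), if_pos rfl, if_neg h32, if_neg h42] at hE
        have hc : r₂ = 0 := (mul_eq_zero.mp (by linear_combination hE)).resolve_right hη₂
        exact one_ne_zero (hrel 0 1 0 (by push_cast; linear_combination hc)).2.1
end
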